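/- arXiv:0906.2252 — 6 statements merged into one kernel-verified Lean document; each statement's English description precedes it below -/
import Mathlib

section
/- Let H1 ∈ ℂ^{r×t_x}, H2 ∈ ℂ^{r×t_s}, let ΣX ∈ ℂ^{t_x×t_x} and ΣZ ∈ ℂ^{r×r} be Hermitian positive definite, and let ΣS ∈ ℂ^{t_s×t_s} be Hermitian positive semidefinite. Then for every inflation factor W ∈ ℂ^{t_x×t_s}, det ΣX · det(ΣZ + H1 ΣX H1* + H2 ΣS H2*) · det ΣZ ≤ det M(W;ΣX,ΣS,ΣZ) · det(ΣZ + H1 ΣX H1*). Equivalently, the per-realization DPC rate R(W) is at most the no-interference upper bound log( det(ΣZ + H1 ΣX H1*) / det ΣZ ). -/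
open Matrix
open scoped ComplexOrder

/-- The DPC covariance block matrix
`M(W; ΣX, ΣS, ΣZ) = [[ΣX + W ΣS W*, ΣX H1* + W ΣS H2*],
                     [H1 ΣX + H2 ΣS W*, ΣZ + H1 ΣX H1* + H2 ΣS H2*]]`. -/
noncomputable def dpcM {r tx ts : ℕ}
    (H1 : Matrix (Fin r) (Fin tx) ℂ) (H2 : Matrix (Fin r) (Fin ts) ℂ)
    (W : Matrix (Fin tx) (Fin ts) ℂ)
    (SX : Matrix (Fin tx) (Fin tx) ℂ) (SS : Matrix (Fin ts) (Fin ts) ℂ)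
    (SZ : Matrix (Fin r) (Fin r) ℂ) :
    Matrix (Fin tx ⊕ Fin r) (Fin tx ⊕ Fin r) ℂ :=
  fromBlocks (SX + W * SS * Wᴴ) (SX * H1ᴴ + W * SS * H2ᴴ)
    (H1 * SX + H2 * SS * Wᴴ) (SZ + H1 * SX * H1ᴴ + H2 * SS * H2ᴴ)

section Aux

variable {n : Type*} [Fintype n] [DecidableEq n]

private lemma aux_one_le_det_one_add {C : Matrix n n ℂ} (hC : C.PosSemidef) :
    (1 : ℂ) ≤ (1 + C).det := by
  have hH : C.IsHermitian := hC.1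
  have hUU : (hH.eigenvectorUnitary : Matrix n n ℂ) *
      star (hH.eigenvectorUnitary : Matrix n n ℂ) = 1 :=
    Matrix.mem_unitaryGroup_iff.mp (hH.eigenvectorUnitary).2
  have h1 : 1 + C = (hH.eigenvectorUnitary : Matrix n n ℂ) *
      (1 + diagonal (RCLike.ofReal ∘ hH.eigenvalues)) *
      star (hH.eigenvectorUnitary : Matrix n n ℂ) := by
    rw [Matrix.mul_add, Matrix.mul_one, Matrix.add_mul, hUU]
    nth_rewrite 1 [hH.spectral_theorem]
    rfl
  have h2 : (1 + C).det
      = ((1 : Matrix n n ℂ) + diagonal (RCLike.ofReal ∘ hH.eigenvalues)).det := by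
    rw [h1, det_mul, det_mul, mul_right_comm, ← det_mul, hUU, det_one, one_mul]
  have h3 : (1 : Matrix n n ℂ) + diagonal (RCLike.ofReal ∘ hH.eigenvalues)
      = diagonal (fun i => 1 + (hH.eigenvalues i : ℂ)) := by
    rw [← diagonal_one, diagonal_add]
    rfl
  rw [h2, h3, det_diagonal]
  have hcast : ∏ i, ((1 : ℂ) + (hH.eigenvalues i : ℂ))
      = (((∏ i, (1 + hH.eigenvalues i)) : ℝ) : ℂ) := by
    push_cast
    rfl
  rw [hcast, show (1 : ℂ) = ((1 : ℝ) : ℂ) by norm_num, Complex.real_le_real]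
  calc (1 : ℝ) = ∏ _i : n, (1 : ℝ) := by simp
  _ ≤ ∏ i, (1 + hH.eigenvalues i) :=
      Finset.prod_le_prod (fun i _ => zero_le_one)
        (fun i _ => by nlinarith [hC.eigenvalues_nonneg i])

open scoped MatrixOrder in
private lemma aux_det_le_det_add {A B : Matrix n n ℂ} (hA : A.PosSemidef)
    (hdet : A.det ≠ 0) (hB : B.PosSemidef) : A.det ≤ (A + B).det := by
  have hSps : (CFC.sqrt A).PosSemidef := (CFC.sqrt_nonneg A).posSemidef
  set S := CFC.sqrt A with hSdef
  have hSmul : S * S = A := CFC.sqrt_mul_sqrt_self A hA.nonneg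
  have hdS : IsUnit S.det := by
    rw [isUnit_iff_ne_zero]
    intro h
    exact hdet (by rw [← hSmul, det_mul, h, zero_mul])
  have hSh : S⁻¹ᴴ = S⁻¹ := by rw [conjTranspose_nonsing_inv, hSps.1.eq]
  have hC : (S⁻¹ * B * S⁻¹).PosSemidef := by
    have := hB.mul_mul_conjTranspose_same S⁻¹
    rwa [hSh] at this
  have h1 : A + B = S * (1 + S⁻¹ * B * S⁻¹) * S := by
    rw [Matrix.mul_add, Matrix.mul_one, Matrix.add_mul, hSmul]
    congr 1
    rw [Matrix.mul_assoc S⁻¹ B S⁻¹, Matrix.mul_nonsing_inv_cancel_left _ _ hdS,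
      Matrix.nonsing_inv_mul_cancel_right _ _ hdS]
  have h2 : (A + B).det = (1 + S⁻¹ * B * S⁻¹).det * A.det := by
    rw [h1, det_mul, det_mul, ← hSmul, det_mul]
    ring
  have h3 : (0 : ℂ) ≤ A.det := by
    rw [hA.1.det_eq_prod_eigenvalues]
    refine Finset.prod_nonneg fun i _ => ?_
    exact Complex.zero_le_real.mpr (hA.eigenvalues_nonneg i)
  calc A.det = 1 * A.det := (one_mul _).symm
  _ ≤ (1 + S⁻¹ * B * S⁻¹).det * A.det :=
      mul_le_mul_of_nonneg_right (aux_one_le_det_one_add hC) h3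
  _ = (A + B).det := h2.symm

end Aux

set_option maxHeartbeats 1000000 in
/-- for every inflation factor `W`,
`det ΣX · det(ΣZ + H1 ΣX H1* + H2 ΣS H2*) · det ΣZ ≤ det M(W) · det(ΣZ + H1 ΣX H1*)`;
equivalently, the per-realization DPC rate `R(W)` is at most the no-interference
upper bound `log( det(ΣZ + H1 ΣX H1*) / det ΣZ )`. -/
theorem dpc_rate_le_noInterference_bound {r tx ts : ℕ}
    (H1 : Matrix (Fin r) (Fin tx) ℂ) (H2 : Matrix (Fin r) (Fin ts) ℂ)
    (SX : Matrix (Fin tx) (Fin tx) ℂ) (SS : Matrix (Fin ts) (Fin ts) ℂ)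
    (SZ : Matrix (Fin r) (Fin r) ℂ)
    (hSX : SX.PosDef) (hSZ : SZ.PosDef) (hSS : SS.PosSemidef)
    (W : Matrix (Fin tx) (Fin ts) ℂ) :
    SX.det.re * (SZ + H1 * SX * H1ᴴ + H2 * SS * H2ᴴ).det.re * SZ.det.re
      ≤ (dpcM H1 H2 W SX SS SZ).det.re * (SZ + H1 * SX * H1ᴴ).det.re
    ∧ Real.log ((SX.det.re * (SZ + H1 * SX * H1ᴴ + H2 * SS * H2ᴴ).det.re) /
          (dpcM H1 H2 W SX SS SZ).det.re)
        ≤ Real.log ((SZ + H1 * SX * H1ᴴ).det.re / SZ.det.re) := by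
  classical
  -- notation
  set E : Matrix (Fin r) (Fin r) ℂ := SZ + H1 * SX * H1ᴴ with hEdef
  set D : Matrix (Fin r) (Fin r) ℂ := E + H2 * SS * H2ᴴ with hDdef
  set b : Matrix (Fin tx) (Fin r) ℂ := SX * H1ᴴ with hbdef
  have hbh : bᴴ = H1 * SX := by
    rw [hbdef, conjTranspose_mul, conjTranspose_conjTranspose, hSX.1.eq]
  -- positive definiteness
  have hEpd : E.PosDef := hSZ.add_posSemidef (hSX.posSemidef.mul_mul_conjTranspose_same H1)
  have hDpd : D.PosDef := hEpd.add_posSemidef (hSS.mul_mul_conjTranspose_same H2)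
  have hEu : IsUnit E.det := hEpd.det_pos.ne'.isUnit
  have hDu : IsUnit D.det := hDpd.det_pos.ne'.isUnit
  have hXu : IsUnit SX.det := hSX.det_pos.ne'.isUnit
  have hZu : IsUnit SZ.det := hSZ.det_pos.ne'.isUnit
  haveI : Invertible E := E.invertibleOfIsUnitDet hEu
  haveI : Invertible D := D.invertibleOfIsUnitDet hDu
  haveI : Invertible SX := SX.invertibleOfIsUnitDet hXu
  haveI : Invertible SZ := SZ.invertibleOfIsUnitDet hZu
  have hEih : E⁻¹ᴴ = E⁻¹ := hEpd.1.inv.eq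
  -- the no-interference Schur complement K
  set K : Matrix (Fin tx) (Fin tx) ℂ := SX - b * E⁻¹ * bᴴ with hKdef
  -- the DPC Schur complement
  set B2 : Matrix (Fin tx) (Fin r) ℂ := b + W * SS * H2ᴴ with hB2def
  have hB2h : B2ᴴ = H1 * SX + H2 * SS * Wᴴ := by
    rw [hB2def, conjTranspose_add, hbh, conjTranspose_mul, conjTranspose_mul,
      conjTranspose_conjTranspose, hSS.1.eq, Matrix.mul_assoc]
  set Sc : Matrix (Fin tx) (Fin tx) ℂ :=
    SX + W * SS * Wᴴ - B2 * D⁻¹ * (H1 * SX + H2 * SS * Wᴴ) with hScdef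
  -- determinant of the DPC matrix via the Schur complement
  have hMdet : (dpcM H1 H2 W SX SS SZ).det = D.det * Sc.det := by
    rw [dpcM, show SZ + H1 * SX * H1ᴴ + H2 * SS * H2ᴴ = D by rw [hDdef, hEdef],
      show SX * H1ᴴ + W * SS * H2ᴴ = B2 by rw [hB2def, hbdef],
      det_fromBlocks₂₂, invOf_eq_nonsing_inv, hScdef]
  -- determinant identity for K : K.det * E.det = SX.det * SZ.det
  have hdet1 : (fromBlocks SX b bᴴ E).det = E.det * K.det := by
    rw [det_fromBlocks₂₂, invOf_eq_nonsing_inv, hKdef]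
  have hdet2 : (fromBlocks SX b bᴴ E).det = SX.det * SZ.det := by
    have hsz : E - bᴴ * SX⁻¹ * b = SZ := by
      rw [hbh, hbdef, Matrix.mul_nonsing_inv_cancel_right _ _ hXu, hEdef,
        ← Matrix.mul_assoc]
      abel
    rw [det_fromBlocks₁₁, invOf_eq_nonsing_inv, hsz]
  have hKE : K.det * E.det = SX.det * SZ.det := by
    rw [mul_comm, ← hdet1, hdet2]
  -- K is positive semidefinite
  have hdiag : (fromBlocks SX (0 : Matrix (Fin tx) (Fin r) ℂ)
      ((0 : Matrix (Fin tx) (Fin r) ℂ)ᴴ) SZ).PosSemidef := by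
    rw [PosDef.fromBlocks₂₂ _ _ hSZ]
    simpa using hSX.posSemidef
  have hM0psd : (fromBlocks SX b bᴴ E).PosSemidef := by
    have h := hdiag.mul_mul_conjTranspose_same
      (fromBlocks 1 0 H1 1 : Matrix (Fin tx ⊕ Fin r) (Fin tx ⊕ Fin r) ℂ)
    have heq : (fromBlocks 1 0 H1 1 : Matrix (Fin tx ⊕ Fin r) (Fin tx ⊕ Fin r) ℂ) *
        fromBlocks SX (0 : Matrix (Fin tx) (Fin r) ℂ) ((0 : Matrix (Fin tx) (Fin r) ℂ)ᴴ) SZ *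
        (fromBlocks 1 0 H1 1 : Matrix (Fin tx ⊕ Fin r) (Fin tx ⊕ Fin r) ℂ)ᴴ
        = fromBlocks SX b bᴴ E := by
      rw [fromBlocks_conjTranspose, fromBlocks_multiply, fromBlocks_multiply]
      simp [hbh, hbdef, hEdef, add_comm, hSX.1.eq]
    rwa [heq] at h
  have hKpsd : K.PosSemidef := by
    have := (PosDef.fromBlocks₂₂ SX b hEpd).mp hM0psd
    rwa [hKdef]
  -- Sc - K is positive semidefinite
  have hScK : (Sc - K).PosSemidef := by
    have hT := hEpd.posSemidef.mul_mul_conjTranspose_same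
      (fromRows (b * E⁻¹) (1 : Matrix (Fin r) (Fin r) ℂ))
    have hV := hSS.mul_mul_conjTranspose_same (fromRows W H2)
    have hTE : fromRows (b * E⁻¹) (1 : Matrix (Fin r) (Fin r) ℂ) * E = fromRows b E := by
      rw [fromRows_mul, Matrix.nonsing_inv_mul_cancel_right _ _ hEu, Matrix.one_mul]
    have hTH : (fromRows (b * E⁻¹) (1 : Matrix (Fin r) (Fin r) ℂ))ᴴ
        = fromCols (E⁻¹ * bᴴ) (1 : Matrix (Fin r) (Fin r) ℂ) := by
      rw [conjTranspose_fromRows_eq_fromCols_conjTranspose, conjTranspose_one,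
        conjTranspose_mul, hEih]
    have h5 : fromRows (b * E⁻¹) (1 : Matrix (Fin r) (Fin r) ℂ) * E *
          (fromRows (b * E⁻¹) (1 : Matrix (Fin r) (Fin r) ℂ))ᴴ
        = fromBlocks (b * E⁻¹ * bᴴ) b bᴴ E := by
      rw [hTE, hTH, fromRows_mul_fromCols, Matrix.mul_one, Matrix.mul_one,
        Matrix.mul_nonsing_inv_cancel_left _ _ hEu, ← Matrix.mul_assoc]
    have h6 : fromRows W H2 * SS * (fromRows W H2)ᴴ
        = fromBlocks (W * SS * Wᴴ) (W * SS * H2ᴴ) (H2 * SS * Wᴴ) (H2 * SS * H2ᴴ) := by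
      rw [fromRows_mul, conjTranspose_fromRows_eq_fromCols_conjTranspose,
        fromRows_mul_fromCols]
    have heq : fromRows (b * E⁻¹) (1 : Matrix (Fin r) (Fin r) ℂ) * E *
          (fromRows (b * E⁻¹) (1 : Matrix (Fin r) (Fin r) ℂ))ᴴ
          + fromRows W H2 * SS * (fromRows W H2)ᴴ
        = fromBlocks (SX + W * SS * Wᴴ - K) B2 B2ᴴ D := by
      rw [h5, h6, fromBlocks_add]
      refine fromBlocks_inj.mpr ⟨?_, ?_, ?_, ?_⟩
      · rw [hKdef]; abel
      · rw [hB2def]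
      · rw [hB2h, hbh]
      · rw [hDdef]
    have hpsd0 : (fromBlocks (SX + W * SS * Wᴴ - K) B2 B2ᴴ D).PosSemidef := by
      rw [← heq]; exact hT.add hV
    have := (PosDef.fromBlocks₂₂ _ _ hDpd).mp hpsd0
    rw [hB2h] at this
    have harr : SX + W * SS * Wᴴ - K - B2 * D⁻¹ * (H1 * SX + H2 * SS * Wᴴ) = Sc - K := by
      rw [hScdef]; abel
    rwa [harr] at this
  -- determinant comparison
  have hKdetne : K.det ≠ 0 := by
    intro h
    have : SX.det * SZ.det = 0 := by rw [← hKE, h, zero_mul]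
    rcases mul_eq_zero.mp this with h' | h'
    · exact hSX.det_pos.ne' h'
    · exact hSZ.det_pos.ne' h'
  have hKSc : K.det ≤ Sc.det := by
    have := aux_det_le_det_add hKpsd hKdetne hScK
    rwa [add_sub_cancel] at this
  -- pass to real parts
  have hx := Complex.lt_def.mp hSX.det_pos
  have hz := Complex.lt_def.mp hSZ.det_pos
  have he := Complex.lt_def.mp hEpd.det_pos
  have hd := Complex.lt_def.mp hDpd.det_pos
  simp only [Complex.zero_re, Complex.zero_im] at hx hz he hd
  have hxre : 0 < SX.det.re := hx.1
  have hzre : 0 < SZ.det.re := hz.1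
  have here' : 0 < E.det.re := he.1
  have hdre : 0 < D.det.re := hd.1
  have hxim : SX.det.im = 0 := hx.2.symm
  have hzim : SZ.det.im = 0 := hz.2.symm
  have heim : E.det.im = 0 := he.2.symm
  have hdim : D.det.im = 0 := hd.2.symm
  have hKle := Complex.le_def.mp hKSc
  have hKEre := congrArg Complex.re hKE
  have hKEim := congrArg Complex.im hKE
  rw [Complex.mul_re, Complex.mul_re, hxim, heim] at hKEre
  rw [Complex.mul_im, Complex.mul_im, hxim, heim, hzim] at hKEim
  simp only [mul_zero, zero_mul, sub_zero, add_zero, zero_add] at hKEre hKEim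
  -- hKEre : K.det.re * E.det.re = SX.det.re * SZ.det.re
  -- hKEim : K.det.im * E.det.re = 0
  have hKim : K.det.im = 0 := by
    rcases mul_eq_zero.mp hKEim with h | h
    · exact h
    · exact absurd h here'.ne'
  have hSim : Sc.det.im = 0 := by rw [← hKle.2, hKim]
  have hKre : 0 < K.det.re := by nlinarith [mul_pos hxre hzre]
  have hSre : 0 < Sc.det.re := lt_of_lt_of_le hKre hKle.1
  have hMre : (dpcM H1 H2 W SX SS SZ).det.re = D.det.re * Sc.det.re := by
    rw [hMdet, Complex.mul_re, hdim, hSim]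
    ring
  have hstep : D.det.re * (K.det.re * E.det.re) ≤ D.det.re * (Sc.det.re * E.det.re) :=
    mul_le_mul_of_nonneg_left (mul_le_mul_of_nonneg_right hKle.1 here'.le) hdre.le
  rw [hKEre] at hstep
  constructor
  · rw [hMre]
    nlinarith [hstep]
  · rw [hMre]
    have h1 : 0 < SX.det.re * D.det.re / (D.det.re * Sc.det.re) := by positivity
    rw [Real.log_le_log_iff h1 (by positivity)]
    rw [div_le_div_iff₀ (by positivity) hzre]
    nlinarith [hstep]
end

section
/- Let A and B be n×n Hermitian positive semidefinite complex matrices such that A + B is positive definite. Then as the real parameter P tends to infinity, log det(P·A + B) / log P tends to rank(A). (Here det(P·A + B) is a positive real for every P ≥ 1.) -/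
open Matrix Filter
open scoped ComplexOrder

private lemma auxLogTendsto {μ : ℝ} (hμ : 0 < μ) :
    Tendsto (fun P : ℝ => Real.log ((P - 1) * μ + 1) / Real.log P) atTop (nhds 1) := by
  have hlog : Tendsto Real.log atTop atTop := Real.tendsto_log_atTop
  have h1 : Tendsto (fun P : ℝ => ((P - 1) * μ + 1) / P) atTop (nhds μ) := by
    have heq : (fun P : ℝ => μ + (1 - μ) / P) =ᶠ[atTop] fun P => ((P - 1) * μ + 1) / P := by
      filter_upwards [eventually_gt_atTop (0 : ℝ)] with P hP
      field_simp
      ring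
    have h : Tendsto (fun P : ℝ => μ + (1 - μ) / P) atTop (nhds (μ + 0)) :=
      tendsto_const_nhds.add (tendsto_const_nhds.div_atTop tendsto_id)
    rw [add_zero] at h
    exact h.congr' heq
  have h2 : Tendsto (fun P : ℝ => Real.log (((P - 1) * μ + 1) / P)) atTop
      (nhds (Real.log μ)) := (Real.continuousAt_log hμ.ne').tendsto.comp h1
  have h3 : Tendsto (fun P : ℝ => Real.log (((P - 1) * μ + 1) / P) / Real.log P)
      atTop (nhds 0) := h2.div_atTop hlog
  have h4 : Tendsto (fun P : ℝ => 1 + Real.log (((P - 1) * μ + 1) / P) / Real.log P)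
      atTop (nhds (1 + 0)) := tendsto_const_nhds.add h3
  rw [add_zero] at h4
  refine h4.congr' ?_
  filter_upwards [eventually_gt_atTop (1 : ℝ)] with P hP
  have hP0 : (0 : ℝ) < P := lt_trans one_pos hP
  have hx : 0 < (P - 1) * μ + 1 := by nlinarith
  have hlogP : Real.log P ≠ 0 := (Real.log_pos hP).ne'
  rw [Real.log_div hx.ne' hP0.ne']
  field_simp
  ring

private lemma auxMainTendsto {m : Type*} [Fintype m] {d : ℝ} (hd : 0 < d) (μ : m → ℝ)
    (hμ : ∀ i, 0 ≤ μ i) (r : ℝ) (hr : r = ∑ i, if μ i ≠ 0 then (1 : ℝ) else 0) :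
    Tendsto (fun P : ℝ => Real.log (d * ∏ i, ((P - 1) * μ i + 1)) / Real.log P) atTop
      (nhds r) := by
  classical
  have hlog : Tendsto Real.log atTop atTop := Real.tendsto_log_atTop
  have hterm : ∀ i : m, Tendsto (fun P : ℝ => Real.log ((P - 1) * μ i + 1) / Real.log P)
      atTop (nhds (if μ i ≠ 0 then (1 : ℝ) else 0)) := by
    intro i
    by_cases h : μ i = 0
    · simp only [h, mul_zero, zero_add, Real.log_one, zero_div, ne_eq, not_true_eq_false,
        if_false]
      exact tendsto_const_nhds
    · simpa [h] using auxLogTendsto (lt_of_le_of_ne (hμ i) (Ne.symm h))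
  have hsum : Tendsto (fun P : ℝ => Real.log d / Real.log P
      + ∑ i, Real.log ((P - 1) * μ i + 1) / Real.log P) atTop
      (nhds (0 + ∑ i, if μ i ≠ 0 then (1 : ℝ) else 0)) :=
    (tendsto_const_nhds.div_atTop hlog).add (tendsto_finset_sum _ fun i _ => hterm i)
  rw [zero_add, ← hr] at hsum
  refine hsum.congr' ?_
  filter_upwards [eventually_gt_atTop (1 : ℝ)] with P hP
  have hpos : ∀ i : m, 0 < (P - 1) * μ i + 1 := fun i => by nlinarith [hμ i]
  rw [Real.log_mul hd.ne' (Finset.prod_pos fun i _ => hpos i).ne',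
      Real.log_prod fun i _ => (hpos i).ne', add_div, Finset.sum_div]

/-- if `A, B` are Hermitian positive semidefinite and `A + B` is
positive definite, then `det(P·A + B)` is a positive real for every `P ≥ 1`, and
`log det(P·A + B) / log P → rank A` as the real parameter `P → ∞`. -/
theorem logDet_div_logP_tendsto_rank {n : ℕ}
    (A B : Matrix (Fin n) (Fin n) ℂ)
    (hA : A.PosSemidef) (hB : B.PosSemidef) (hAB : (A + B).PosDef) :
    (∀ P : ℝ, 1 ≤ P → 0 < ((P : ℂ) • A + B).det.re)
    ∧ Tendsto (fun P : ℝ => Real.log (((P : ℂ) • A + B).det.re) / Real.log P)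
        atTop (nhds (A.rank : ℝ)) := by
  classical
  have hCdet : (A + B).det ≠ 0 := hAB.det_pos.ne'
  open scoped MatrixOrder in
  set S := CFC.sqrt (A + B) with hSdef
  open scoped MatrixOrder in
  have hS : S.PosSemidef := (CFC.sqrt_nonneg (A + B)).posSemidef
  open scoped MatrixOrder in
  have hSS : S * S = A + B := CFC.sqrt_mul_sqrt_self (A + B) hAB.posSemidef.nonneg
  have hSdet : IsUnit S.det := by
    refine isUnit_iff_ne_zero.mpr fun h => hCdet ?_
    rw [← hSS, det_mul, h, zero_mul]
  have hSinv : S * S⁻¹ = 1 := mul_nonsing_inv _ hSdet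
  have hSinv' : S⁻¹ * S = 1 := nonsing_inv_mul _ hSdet
  have hSinvH : S⁻¹ᴴ = S⁻¹ := by rw [conjTranspose_nonsing_inv, hS.1]
  have hM : (S⁻¹ * A * S⁻¹).PosSemidef := by
    have h := hA.mul_mul_conjTranspose_same S⁻¹
    rwa [hSinvH] at h
  have hμ0 : ∀ i, 0 ≤ hM.1.eigenvalues i := hM.eigenvalues_nonneg
  obtain ⟨hdpos, hdC⟩ : 0 < (A + B).det.re ∧ (A + B).det = ((A + B).det.re : ℂ) := by
    have h := hAB.det_pos
    rw [Complex.lt_def] at h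
    exact ⟨by simpa using h.1, Complex.ext (by simp) (by simpa using h.2.symm)⟩
  -- key determinant identity
  have key : ∀ P : ℝ, ((P : ℂ) • A + B).det
      = (((A + B).det.re * ∏ i, ((P - 1) * hM.1.eigenvalues i + 1) : ℝ) : ℂ) := by
    intro P
    have h1 : S * (((P : ℂ) - 1) • (S⁻¹ * A * S⁻¹)) * S = ((P : ℂ) - 1) • A := by
      rw [mul_smul_comm, smul_mul_assoc]
      congr 1
      calc S * (S⁻¹ * A * S⁻¹) * S = (S * S⁻¹) * A * (S⁻¹ * S) := by noncomm_ring
        _ = A := by rw [hSinv, hSinv', one_mul, mul_one]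
    have hmat : (P : ℂ) • A + B = S * ((((P : ℂ) - 1) • (S⁻¹ * A * S⁻¹)) + 1) * S := by
      rw [mul_add, add_mul, h1, mul_one, hSS, sub_smul, one_smul]
      abel
    have hU : (hM.1.eigenvectorUnitary : Matrix (Fin n) (Fin n) ℂ)
        * (star hM.1.eigenvectorUnitary : Matrix (Fin n) (Fin n) ℂ) = 1 :=
      Matrix.mem_unitaryGroup_iff.mp hM.1.eigenvectorUnitary.2
    have hU' : (star hM.1.eigenvectorUnitary : Matrix (Fin n) (Fin n) ℂ)
        * (hM.1.eigenvectorUnitary : Matrix (Fin n) (Fin n) ℂ) = 1 :=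
      Matrix.mem_unitaryGroup_iff'.mp hM.1.eigenvectorUnitary.2
    have h2 : (((P : ℂ) - 1) • (S⁻¹ * A * S⁻¹)) + 1
        = (hM.1.eigenvectorUnitary : Matrix (Fin n) (Fin n) ℂ)
          * (((P : ℂ) - 1) • diagonal (RCLike.ofReal ∘ hM.1.eigenvalues) + 1)
          * (star hM.1.eigenvectorUnitary : Matrix (Fin n) (Fin n) ℂ) := by
      rw [mul_add, add_mul, mul_one, hU, mul_smul_comm, smul_mul_assoc,
        ← show S⁻¹ * A * S⁻¹ = (hM.1.eigenvectorUnitary : Matrix (Fin n) (Fin n) ℂ)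
          * diagonal (RCLike.ofReal ∘ hM.1.eigenvalues)
          * (star hM.1.eigenvectorUnitary : Matrix (Fin n) (Fin n) ℂ) from hM.1.spectral_theorem]
    have h3 : det ((((P : ℂ) - 1) • (S⁻¹ * A * S⁻¹)) + 1)
        = ∏ i, (((P : ℂ) - 1) * (hM.1.eigenvalues i : ℂ) + 1) := by
      rw [h2, det_mul, det_mul, mul_comm, ← mul_assoc, ← det_mul, hU', det_one, one_mul]
      rw [← diagonal_one, ← diagonal_smul, diagonal_add, det_diagonal]
      refine Finset.prod_congr rfl fun i _ => ?_
      simp [Function.comp, smul_eq_mul]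
    calc ((P : ℂ) • A + B).det
        = det (S * ((((P : ℂ) - 1) • (S⁻¹ * A * S⁻¹)) + 1) * S) := by rw [← hmat]
      _ = (A + B).det * det ((((P : ℂ) - 1) • (S⁻¹ * A * S⁻¹)) + 1) := by
          rw [det_mul, det_mul, ← hSS, det_mul]
          ring
      _ = (((A + B).det.re * ∏ i, ((P - 1) * hM.1.eigenvalues i + 1) : ℝ) : ℂ) := by
          rw [h3, hdC]
          push_cast
          congr 1
  have hre : ∀ P : ℝ, ((P : ℂ) • A + B).det.re
      = (A + B).det.re * ∏ i, ((P - 1) * hM.1.eigenvalues i + 1) := fun P => by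
    rw [key P, Complex.ofReal_re]
  constructor
  · intro P hP
    rw [hre]
    exact mul_pos hdpos (Finset.prod_pos fun i _ => by nlinarith [hμ0 i])
  · have hrank : (A.rank : ℝ) = ∑ i, if hM.1.eigenvalues i ≠ 0 then (1 : ℝ) else 0 := by
      have h1 : A.rank = (S⁻¹ * A * S⁻¹).rank := by
        rw [rank_mul_eq_left_of_isUnit_det S⁻¹ _ (isUnit_nonsing_inv_det _ hSdet),
          rank_mul_eq_right_of_isUnit_det S⁻¹ A (isUnit_nonsing_inv_det _ hSdet)]
      rw [h1, hM.1.rank_eq_card_non_zero_eigs]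
      rw [Fintype.card_subtype, Finset.sum_boole]
    refine (auxMainTendsto hdpos hM.1.eigenvalues hμ0 _ hrank).congr fun P => ?_
    rw [hre P]
end

section
/- Let A and B be n×n Hermitian positive semidefinite complex matrices such that A + B is positive definite. Then there exists a real constant L > 0 such that det(P·A + B) / P^{rank(A)} tends to L as the real parameter P tends to infinity. In particular, log det(P·A + B) − rank(A)·log P remains bounded as P → ∞. -/
open Matrix Filter
open scoped ComplexOrder

/-- if `A, B` are Hermitian positive semidefinite and `A + B` is
positive definite, then there is a constant `L > 0` with
`det(P·A + B) / P^(rank A) → L` as `P → ∞`; in particular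
`log det(P·A + B) − rank A · log P` remains bounded as `P → ∞`. -/
theorem det_div_pow_rank_tendsto_const {n : ℕ}
    (A B : Matrix (Fin n) (Fin n) ℂ)
    (hA : A.PosSemidef) (hB : B.PosSemidef) (hAB : (A + B).PosDef) :
    (∃ L : ℝ, 0 < L ∧
      Tendsto (fun P : ℝ => ((P : ℂ) • A + B).det.re / P ^ A.rank)
        atTop (nhds L))
    ∧ ∃ C : ℝ, ∀ᶠ P : ℝ in atTop,
        |Real.log (((P : ℂ) • A + B).det.re) - (A.rank : ℝ) * Real.log P| ≤ C := by
  classical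
  set Cm := A + B with hCm
  have hCps : Cm.PosSemidef := hAB.posSemidef
  open scoped MatrixOrder in set S := CFC.sqrt Cm with hSdef
  have hS : S.PosSemidef := open scoped MatrixOrder in (CFC.sqrt_nonneg Cm).posSemidef
  have hSS : S * S = Cm := open scoped MatrixOrder in CFC.sqrt_mul_sqrt_self Cm hCps.nonneg
  -- det C positive
  have hdetC : (0 : ℂ) < Cm.det := hAB.det_pos
  have hdetCre : 0 < Cm.det.re := by
    rw [Complex.lt_def] at hdetC; exact hdetC.1
  have hdetCim : Cm.det.im = 0 := by
    rw [Complex.lt_def] at hdetC; simpa using hdetC.2.symm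
  have hdetS : IsUnit S.det := by
    have h2 : S.det * S.det = Cm.det := by rw [← det_mul, hSS]
    have : S.det ≠ 0 := by
      intro h; rw [h, mul_zero] at h2; exact hdetC.ne' h2.symm
    exact isUnit_iff_ne_zero.mpr this
  have hSinvH : (S⁻¹).IsHermitian := hS.1.inv
  set M := S⁻¹ * A * S⁻¹ with hMdef
  have hMps : M.PosSemidef := by
    have := hA.conjTranspose_mul_mul_same S⁻¹
    rwa [hSinvH.eq] at this
  have hM : M.IsHermitian := hMps.1
  -- rank M = rank A
  have hrank : M.rank = A.rank := by
    rw [hMdef, rank_mul_eq_left_of_isUnit_det _ _ ((isUnit_nonsing_inv_det_iff).mpr hdetS),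
      rank_mul_eq_right_of_isUnit_det _ _ ((isUnit_nonsing_inv_det_iff).mpr hdetS)]
  -- key identity
  have hkey : ∀ x : ℂ, x • A + B = S * (((x : ℂ) - 1) • M + 1) * S := by
    intro x
    have hSMS : S * M * S = A := by
      rw [hMdef]
      rw [show S * (S⁻¹ * A * S⁻¹) * S = (S * S⁻¹) * A * (S⁻¹ * S) by
        simp only [Matrix.mul_assoc]]
      rw [mul_nonsing_inv _ hdetS, nonsing_inv_mul _ hdetS, one_mul, mul_one]
    calc x • A + B = (x - 1) • A + Cm := by rw [hCm]; module
    _ = (x-1) • (S * M * S) + S * S := by rw [hSMS, hSS]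
    _ = S * ((x - 1) • M + 1) * S := by
        rw [Matrix.mul_add, Matrix.add_mul, Matrix.mul_smul, Matrix.smul_mul, mul_one]
  -- determinant formula
  set μ := hM.eigenvalues with hμdef
  have hμnn : ∀ i, 0 ≤ μ i := hMps.eigenvalues_nonneg
  have hdet : ∀ x : ℂ, (x • A + B).det = Cm.det * ∏ i, ((x - 1) * (μ i : ℂ) + 1) := by
    intro x
    rw [hkey x, det_mul, det_mul, mul_comm, ← mul_assoc, ← det_mul, hSS]
    congr 1
    -- det ((x-1) • M + 1) = ∏ ...
    have hspec := hM.spectral_theorem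
    rw [Unitary.conjStarAlgAut_apply] at hspec
    set U : Matrix (Fin n) (Fin n) ℂ := (hM.eigenvectorUnitary : Matrix (Fin n) (Fin n) ℂ)
    have hU1 : U * star U = 1 := (Matrix.mem_unitaryGroup_iff).mp hM.eigenvectorUnitary.2
    have : (x - 1) • M + 1 = U * ((x-1) • diagonal (RCLike.ofReal ∘ μ) + 1) * star U := by
      rw [Matrix.mul_add, Matrix.add_mul, Matrix.mul_smul, Matrix.smul_mul, mul_one, hU1,
        ← hspec]
    have hU2 : star U * U = 1 := (Matrix.mem_unitaryGroup_iff').mp hM.eigenvectorUnitary.2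
    rw [this, det_mul, det_mul, mul_comm, ← mul_assoc, ← det_mul, hU2, det_one, one_mul]
    rw [show ((x-1) • diagonal (RCLike.ofReal ∘ μ) + 1 : Matrix (Fin n) (Fin n) ℂ)
        = diagonal (fun i => (x - 1) * (μ i : ℂ) + 1) by
      rw [← diagonal_one, ← diagonal_smul, ← diagonal_add]; rfl]
    rw [det_diagonal]
  -- real determinant formula
  have hdetre : ∀ P : ℝ, (((P:ℂ) • A + B).det).re
      = Cm.det.re * ∏ i, ((P - 1) * μ i + 1) := by
    intro P
    have hC : Cm.det = ((Cm.det.re : ℝ) : ℂ) := by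
      apply Complex.ext <;> simp [hdetCim]
    have : ((P:ℂ) • A + B).det = ((Cm.det.re * ∏ i, ((P - 1) * μ i + 1) : ℝ) : ℂ) := by
      rw [hdet P, Complex.ofReal_mul, Complex.ofReal_prod, ← hC]
      congr 1
      apply Finset.prod_congr rfl
      intro i _
      push_cast
      ring
    rw [this, Complex.ofReal_re]
  set s : Finset (Fin n) := Finset.univ.filter (fun i => μ i ≠ 0) with hsdef
  have hsrank : A.rank = s.card := by
    rw [← hrank, hM.rank_eq_card_non_zero_eigs, Fintype.card_subtype]
  set L : ℝ := Cm.det.re * ∏ i ∈ s, μ i with hLdef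
  have hL : 0 < L := by
    apply mul_pos hdetCre
    apply Finset.prod_pos
    intro i hi
    have : μ i ≠ 0 := by simpa [hsdef] using hi
    exact lt_of_le_of_ne (hμnn i) (Ne.symm this)
  have htend : Tendsto (fun P : ℝ => ((P : ℂ) • A + B).det.re / P ^ A.rank) atTop (nhds L) := by
    have h1 : ∀ i ∈ s, Tendsto (fun P : ℝ => ((P-1)*μ i + 1)/P) atTop (nhds (μ i)) := by
      intro i _
      have h0 : Tendsto (fun P : ℝ => μ i + (1 - μ i)/P) atTop (nhds (μ i + 0)) :=
        tendsto_const_nhds.add (tendsto_const_nhds.div_atTop tendsto_id)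
      rw [add_zero] at h0
      apply h0.congr'
      filter_upwards [eventually_gt_atTop 0] with P hP
      field_simp
      ring
    have h2 : Tendsto (fun P : ℝ => Cm.det.re * ∏ i ∈ s, (((P-1)*μ i + 1)/P))
        atTop (nhds L) := (tendsto_finset_prod s h1).const_mul _
    apply h2.congr'
    filter_upwards [eventually_gt_atTop 0] with P hP
    have hprod : ∏ i, ((P-1)*μ i + 1) = ∏ i ∈ s, ((P-1)*μ i + 1) := by
      symm
      apply Finset.prod_subset (Finset.subset_univ s)
      intro i _ hi
      have : μ i = 0 := by simpa [hsdef] using hi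
      simp [this]
    rw [hdetre P, hprod, hsrank, Finset.prod_div_distrib, Finset.prod_const, mul_div_assoc]
  refine ⟨⟨L, hL, htend⟩, ⟨max |Real.log (L/2)| |Real.log (2*L)|, ?_⟩⟩
  have hlow : ∀ᶠ P : ℝ in atTop, L/2 < ((P:ℂ)•A+B).det.re / P ^ A.rank :=
    htend.eventually (eventually_gt_nhds (by linarith))
  have hhigh : ∀ᶠ P : ℝ in atTop, ((P:ℂ)•A+B).det.re / P ^ A.rank < 2*L :=
    htend.eventually (eventually_lt_nhds (by linarith))
  filter_upwards [hlow, hhigh, eventually_gt_atTop 0] with P h1 h2 hP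
  set f := ((P:ℂ)•A+B).det.re / P ^ A.rank with hf
  have hPr : (0:ℝ) < P ^ A.rank := pow_pos hP _
  have hfpos : 0 < f := lt_trans (by linarith) h1
  have hdetval : ((P:ℂ)•A+B).det.re = f * P ^ A.rank := by
    rw [hf]; field_simp
  rw [hdetval, Real.log_mul (ne_of_gt hfpos) (ne_of_gt hPr), Real.log_pow]
  have heq : Real.log f + A.rank * Real.log P - A.rank * Real.log P = Real.log f := by ring
  rw [heq]
  have hl1 : Real.log (L/2) ≤ Real.log f := Real.log_le_log (by linarith) h1.le
  have hl2 : Real.log f ≤ Real.log (2*L) := Real.log_le_log hfpos h2.le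
  exact abs_le_max_abs_abs hl1 hl2
end

section
/- Let H1 ∈ ℂ^{r×t_x}, H2 ∈ ℂ^{r×t_s}, W ∈ ℂ^{t_x×t_s}, let ΣX ∈ ℂ^{t_x×t_x} be Hermitian positive definite and ΣS ∈ ℂ^{t_s×t_s} Hermitian positive semidefinite. Then the (t_x+r)×(t_x+r) Hermitian positive semidefinite block matrix M0 = [[ΣX + W ΣS W*, ΣX H1* + W ΣS H2*], [H1 ΣX + H2 ΣS W*, H1 ΣX H1* + H2 ΣS H2*]] has rank(M0) = t_x + rank( (H2 − H1 W) ΣS (H2 − H1 W)* ). -/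
open Matrix
open scoped ComplexOrder


private def subProdEquiv {R M₁ M₂ : Type*} [CommRing R] [AddCommGroup M₁] [AddCommGroup M₂]
    [Module R M₁] [Module R M₂] (p : Submodule R M₁) (q : Submodule R M₂) :
    (p.prod q) ≃ₗ[R] p × q where
  toFun x := (⟨x.1.1, x.2.1⟩, ⟨x.1.2, x.2.2⟩)
  invFun x := ⟨(x.1.1, x.2.1), ⟨x.1.2, x.2.2⟩⟩
  map_add' _ _ := rfl
  map_smul' _ _ := rfl
  left_inv _ := rfl
  right_inv _ := rfl

private lemma range_prodMap' {R M₁ M₂ N₁ N₂ : Type*} [CommRing R]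
    [AddCommGroup M₁] [AddCommGroup M₂] [AddCommGroup N₁] [AddCommGroup N₂]
    [Module R M₁] [Module R M₂] [Module R N₁] [Module R N₂]
    (f : M₁ →ₗ[R] N₁) (g : M₂ →ₗ[R] N₂) :
    LinearMap.range (f.prodMap g) = (LinearMap.range f).prod (LinearMap.range g) := by
  ext x
  simp only [LinearMap.mem_range, Submodule.mem_prod]
  constructor
  · rintro ⟨y, rfl⟩
    exact ⟨⟨y.1, rfl⟩, ⟨y.2, rfl⟩⟩
  · rintro ⟨⟨a, ha⟩, ⟨b, hb⟩⟩
    exact ⟨(a, b), Prod.ext ha hb⟩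

private lemma rank_fromBlocks_diag' {m n p q : ℕ}
    (A : Matrix (Fin m) (Fin n) ℂ) (D : Matrix (Fin p) (Fin q) ℂ) :
    (fromBlocks A 0 0 D).rank = A.rank + D.rank := by
  have hM : (fromBlocks A 0 0 D).mulVecLin =
      ((LinearEquiv.sumArrowLequivProdArrow (Fin m) (Fin p) ℂ ℂ).symm.toLinearMap) ∘ₗ
        (A.mulVecLin.prodMap D.mulVecLin) ∘ₗ
        (LinearEquiv.sumArrowLequivProdArrow (Fin n) (Fin q) ℂ ℂ).toLinearMap := by
    apply LinearMap.ext; intro v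
    funext i
    cases i with
    | inl i =>
      simp [Matrix.fromBlocks_mulVec, LinearEquiv.sumArrowLequivProdArrow,
        Equiv.sumArrowEquivProdArrow]
    | inr i =>
      simp [Matrix.fromBlocks_mulVec, LinearEquiv.sumArrowLequivProdArrow,
        Equiv.sumArrowEquivProdArrow]
  rw [Matrix.rank, hM, LinearMap.range_comp, LinearMap.range_comp_of_range_eq_top _
    (LinearEquiv.range _), LinearEquiv.finrank_map_eq, range_prodMap',
    (subProdEquiv _ _).finrank_eq, Module.finrank_prod, Matrix.rank, Matrix.rank]

/-- the noiseless part
`M0 = [[ΣX + W ΣS W*, ΣX H1* + W ΣS H2*], [H1 ΣX + H2 ΣS W*, H1 ΣX H1* + H2 ΣS H2*]]`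
of the DPC covariance matrix is Hermitian positive semidefinite and has
`rank M0 = t_x + rank((H2 − H1 W) ΣS (H2 − H1 W)*)`. -/
theorem rank_noiseless_dpc_block {r tx ts : ℕ}
    (H1 : Matrix (Fin r) (Fin tx) ℂ) (H2 : Matrix (Fin r) (Fin ts) ℂ)
    (W : Matrix (Fin tx) (Fin ts) ℂ)
    (SX : Matrix (Fin tx) (Fin tx) ℂ) (SS : Matrix (Fin ts) (Fin ts) ℂ)
    (hSX : SX.PosDef) (hSS : SS.PosSemidef) :
    (fromBlocks (SX + W * SS * Wᴴ) (SX * H1ᴴ + W * SS * H2ᴴ)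
        (H1 * SX + H2 * SS * Wᴴ) (H1 * SX * H1ᴴ + H2 * SS * H2ᴴ)).PosSemidef
    ∧ (fromBlocks (SX + W * SS * Wᴴ) (SX * H1ᴴ + W * SS * H2ᴴ)
        (H1 * SX + H2 * SS * Wᴴ) (H1 * SX * H1ᴴ + H2 * SS * H2ᴴ)).rank
      = tx + ((H2 - H1 * W) * SS * (H2 - H1 * W)ᴴ).rank := by
  set K := H2 - H1 * W with hK
  open scoped MatrixOrder in set sX := CFC.sqrt SX with hsXdef
  open scoped MatrixOrder in set sS := CFC.sqrt SS with hsSdef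
  have hsX : sXᴴ = sX := open scoped MatrixOrder in (CFC.sqrt_nonneg SX).posSemidef.1
  have hsS : sSᴴ = sS := open scoped MatrixOrder in (CFC.sqrt_nonneg SS).posSemidef.1
  have hsX2 : sX * sX = SX := open scoped MatrixOrder in CFC.sqrt_mul_sqrt_self SX hSX.posSemidef.nonneg
  have hsS2 : sS * sS = SS := open scoped MatrixOrder in CFC.sqrt_mul_sqrt_self SS hSS.nonneg
  set G : Matrix (Fin tx ⊕ Fin r) (Fin tx ⊕ Fin ts) ℂ :=
    fromBlocks sX (W * sS) (H1 * sX) (H2 * sS) with hGdef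
  have hG : G * Gᴴ =
      fromBlocks (SX + W * SS * Wᴴ) (SX * H1ᴴ + W * SS * H2ᴴ)
        (H1 * SX + H2 * SS * Wᴴ) (H1 * SX * H1ᴴ + H2 * SS * H2ᴴ) := by
    rw [hGdef, fromBlocks_conjTranspose, fromBlocks_multiply, ← hsX2, ← hsS2]
    simp [conjTranspose_mul, hsX, hsS, Matrix.mul_assoc]
  refine ⟨hG ▸ posSemidef_self_mul_conjTranspose G, ?_⟩
  rw [← hG, rank_self_mul_conjTranspose]
  -- G = T * U
  set T : Matrix (Fin tx ⊕ Fin r) (Fin tx ⊕ Fin r) ℂ := fromBlocks 1 0 H1 1 with hTdef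
  set U : Matrix (Fin tx ⊕ Fin r) (Fin tx ⊕ Fin ts) ℂ :=
    fromBlocks sX (W * sS) 0 (K * sS) with hUdef
  have hTU : T * U = G := by
    rw [hTdef, hUdef, hGdef, fromBlocks_multiply]
    simp [hK, Matrix.sub_mul, Matrix.mul_assoc]
  have hTdet : IsUnit T.det := by
    rw [hTdef, det_fromBlocks_zero₁₂]
    simp
  rw [← hTU, rank_mul_eq_right_of_isUnit_det _ _ hTdet]
  -- sX is invertible
  have hsXdet : IsUnit sX.det := by
    have : sX.det * sX.det = SX.det := by rw [← det_mul, hsX2]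
    have h2 : IsUnit SX.det := (Matrix.isUnit_iff_isUnit_det _).1 hSX.isUnit
    exact isUnit_of_mul_isUnit_left (this ▸ h2)
  -- column reduce U
  set Rt : Matrix (Fin tx ⊕ Fin ts) (Fin tx ⊕ Fin ts) ℂ :=
    fromBlocks 1 (-(sX⁻¹ * (W * sS))) 0 1 with hRdef
  have hRdet : IsUnit Rt.det := by
    rw [hRdef, det_fromBlocks_zero₂₁]
    simp
  have hUR : U * Rt = fromBlocks sX 0 0 (K * sS) := by
    rw [hUdef, hRdef, fromBlocks_multiply]
    simp [Matrix.mul_neg, ← Matrix.mul_assoc, mul_nonsing_inv _ hsXdet]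
  have : U.rank = (fromBlocks sX 0 0 (K * sS)).rank := by
    rw [← hUR, rank_mul_eq_left_of_isUnit_det _ _ hRdet]
  rw [this, rank_fromBlocks_diag', Matrix.rank_of_isUnit _ ((Matrix.isUnit_iff_isUnit_det _).2 hsXdet),
    Fintype.card_fin]
  congr 1
  rw [← rank_self_mul_conjTranspose (K * sS)]
  congr 1
  rw [conjTranspose_mul, hsS, Matrix.mul_assoc, ← Matrix.mul_assoc sS, hsS2, Matrix.mul_assoc]
end

section
/- (Theorem 1, expectation form.) Let μ be a probability measure on pairs (H1,H2) ∈ ℂ^{r×t_x} × ℂ^{r×t_s} such that μ-almost every pair satisfies the genericity condition: for every (t_x+t_s)×(t_x+t_s) Hermitian positive semidefinite matrix A, rank([H1 H2] A [H1 H2]*) = min(r, rank A). Let Σ̄X ∈ ℂ^{t_x×t_x} and ΣZ ∈ ℂ^{r×r} be Hermitian positive definite, Σ̄S ∈ ℂ^{t_s×t_s} Hermitian positive semidefinite, c > 0, and W ∈ ℂ^{t_x×t_s} a fixed inflation factor. For P ≥ 1 put ΣX = P·Σ̄X, ΣS = cP·Σ̄S and let f_P(H1,H2) = log( det ΣX ·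 det(ΣZ + H1 ΣX H1* + H2 ΣS H2*) / det M(W;ΣX,ΣS,ΣZ) ). Assume f_P is μ-integrable for each P ≥ 2 and that there is a μ-integrable function g with |f_P(H1,H2)|/log P ≤ g(H1,H2) μ-a.e. for all P ≥ 2. Then ( ∫ f_P dμ ) / log P tends, as P → ∞, to min(r, t_x + rank Σ̄S) − min(r, rank Σ̄S); in particular this limit is the same for every such W, and equals the value for W = 0. -/
open Matrix Filter MeasureTheory
open scoped ComplexOrder

/-- Measurable structure on matrices, transported from the pi type `m → n → ℂ`. -/
noncomputable instance matrixMeasurableSpace (m n : Type*) : MeasurableSpace (Matrix m n ℂ) :=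
  inferInstanceAs (MeasurableSpace (m → n → ℂ))

/-- The per-realization DPC rate `f_P(H1, H2)` at power `P`, interference power `cP`,
inflation factor `W`, with base covariances `Σ̄X, Σ̄S` and noise covariance `ΣZ`. -/
noncomputable def dpcRate {r tx ts : ℕ}
    (W : Matrix (Fin tx) (Fin ts) ℂ)
    (SXb : Matrix (Fin tx) (Fin tx) ℂ) (SSb : Matrix (Fin ts) (Fin ts) ℂ)
    (SZ : Matrix (Fin r) (Fin r) ℂ) (c P : ℝ)
    (H : Matrix (Fin r) (Fin tx) ℂ × Matrix (Fin r) (Fin ts) ℂ) : ℝ :=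
  Real.log ((((P : ℂ) • SXb).det.re *
      (SZ + H.1 * ((P : ℂ) • SXb) * H.1ᴴ
         + H.2 * (((c * P : ℝ) : ℂ) • SSb) * H.2ᴴ).det.re) /
    (dpcM H.1 H.2 W ((P : ℂ) • SXb) (((c * P : ℝ) : ℂ) • SSb) SZ).det.re)


namespace DPCAux

open Module

lemma det_eq_re {n : Type*} [Fintype n] [DecidableEq n] {M : Matrix n n ℂ} (hM : M.PosDef) :
    M.det = (M.det.re : ℂ) := by
  have := hM.det_pos
  rw [Complex.lt_def] at this
  rw [← Complex.re_add_im M.det, ← this.2]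
  simp

lemma det_re_pos {n : Type*} [Fintype n] [DecidableEq n] {M : Matrix n n ℂ} (hM : M.PosDef) :
    0 < M.det.re := by
  have := hM.det_pos
  rw [Complex.lt_def] at this
  simpa using this.1

lemma posSemidef_real_smul {n : Type*} [Fintype n] {G : Matrix n n ℂ}
    (hG : G.PosSemidef) {P : ℝ} (hP : 0 ≤ P) : ((P : ℂ) • G).PosSemidef := by
  refine Matrix.PosSemidef.of_dotProduct_mulVec_nonneg ?_ fun x => ?_
  · unfold Matrix.IsHermitian
    rw [conjTranspose_smul, hG.isHermitian]
    congr 1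
    simp [Complex.ext_iff]
  · rw [smul_mulVec, dotProduct_smul]
    have h0 : (0:ℂ) ≤ (P : ℂ) := by rw [Complex.le_def]; simp [hP]
    exact mul_nonneg h0 (hG.dotProduct_mulVec_nonneg x)

lemma tendsto_log_affine_div_log {β : ℝ} (hβ : 0 < β) :
    Tendsto (fun P : ℝ => Real.log (1 + (P - 1) * β) / Real.log P) atTop (nhds 1) := by
  have h1 : Tendsto (fun P : ℝ => (1 + (P - 1) * β) / P) atTop (nhds β) := by
    have he : (fun P : ℝ => (1 - β) * P⁻¹ + β) =ᶠ[atTop] fun P => (1 + (P - 1) * β) / P := by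
      filter_upwards [eventually_gt_atTop 0] with P hP
      field_simp
      ring
    have h : Tendsto (fun P : ℝ => (1 - β) * P⁻¹ + β) atTop (nhds ((1 - β) * 0 + β)) :=
      (tendsto_inv_atTop_zero.const_mul _).add_const β
    rw [(by ring : (1 - β) * 0 + β = β)] at h
    exact h.congr' he
  have h2 : Tendsto (fun P : ℝ => Real.log ((1 + (P - 1) * β) / P)) atTop
      (nhds (Real.log β)) := (Real.continuousAt_log hβ.ne').tendsto.comp h1
  have h3 : Tendsto (fun P : ℝ => Real.log ((1 + (P - 1) * β) / P) / Real.log P) atTop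
      (nhds 0) := h2.div_atTop Real.tendsto_log_atTop
  have h4 := h3.add_const 1
  rw [zero_add] at h4
  refine h4.congr' ?_
  filter_upwards [eventually_ge_atTop 2] with P hP
  have hP0 : (0 : ℝ) < P := by linarith
  have harg : (0 : ℝ) < 1 + (P - 1) * β := by nlinarith
  have hlog : Real.log P ≠ 0 := (Real.log_pos (by linarith)).ne'
  rw [Real.log_div harg.ne' hP0.ne', sub_div, div_self hlog]
  ring

open scoped MatrixOrder in
theorem tendsto_logdet_rank {n : Type*} [Fintype n] [DecidableEq n]
    (E K : Matrix n n ℂ)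
    (hK : K.PosSemidef) (hEK : (E + K).PosDef) :
    Tendsto (fun P : ℝ => Real.log ((E + (P : ℂ) • K).det.re) / Real.log P)
      atTop (nhds (K.rank : ℝ)) := by
  set N := E + K with hNdef
  have hNpsd := hEK.posSemidef
  set Q := CFC.sqrt N with hQdef
  have hQpsd : Q.PosSemidef := (CFC.sqrt_nonneg N).posSemidef
  have hQQ : Q * Q = N := CFC.sqrt_mul_sqrt_self N hNpsd.nonneg
  have hQH : Qᴴ = Q := hQpsd.isHermitian
  have hdetQ : IsUnit Q.det := by
    have hm : Q.det * Q.det = N.det := by rw [← det_mul, hQQ]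
    have hN0 : N.det ≠ 0 := hEK.det_pos.ne'
    exact isUnit_iff_ne_zero.2 fun h => hN0 (by rw [← hm, h, mul_zero])
  have hQinvH : (Q⁻¹)ᴴ = Q⁻¹ := by rw [conjTranspose_nonsing_inv, hQH]
  set B := Q⁻¹ * K * Q⁻¹ with hBdef
  have hB : B.PosSemidef := by
    have := hK.mul_mul_conjTranspose_same Q⁻¹
    rwa [hQinvH] at this
  have hQBQ : Q * B * Q = K := by
    rw [hBdef, ← Matrix.mul_assoc, ← Matrix.mul_assoc, Matrix.mul_nonsing_inv _ hdetQ,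
      Matrix.one_mul, Matrix.mul_assoc, Matrix.nonsing_inv_mul _ hdetQ, Matrix.mul_one]
  have key : ∀ p : ℂ, E + p • K = Q * (1 + (p - 1) • B) * Q := by
    intro p
    have h : Q * (1 + (p - 1) • B) * Q = Q * Q + (p - 1) • (Q * B * Q) := by
      rw [Matrix.mul_add, Matrix.mul_one, Matrix.add_mul, mul_smul_comm, smul_mul_assoc]
    rw [h, hQQ, hQBQ, hNdef, sub_smul, one_smul]
    abel
  have hdet : ∀ p : ℂ, (E + p • K).det = N.det * (1 + (p - 1) • B).det := by
    intro p
    rw [key p, det_mul, det_mul, ← hQQ, det_mul]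
    ring
  have hBH := hB.isHermitian
  set β : n → ℝ := hBH.eigenvalues with hβdef
  have hβ0 : ∀ i, 0 ≤ β i := hB.eigenvalues_nonneg
  set U : Matrix n n ℂ := (hBH.eigenvectorUnitary : Matrix n n ℂ) with hUdef
  have hUU : U * star U = 1 := (Matrix.mem_unitaryGroup_iff).mp hBH.eigenvectorUnitary.2
  have hUU' : star U * U = 1 := (Matrix.mem_unitaryGroup_iff').mp hBH.eigenvectorUnitary.2
  have hdet2 : ∀ t : ℝ, (1 + (t : ℂ) • B).det = ∏ i, ((1 + t * β i : ℝ) : ℂ) := by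
    intro t
    have hspec : B = U * Matrix.diagonal (RCLike.ofReal ∘ β) * star U := hBH.spectral_theorem
    have h1 : (1 : Matrix n n ℂ) + (t : ℂ) • B
        = U * (1 + (t : ℂ) • Matrix.diagonal (RCLike.ofReal ∘ β)) * star U := by
      rw [Matrix.mul_add, Matrix.add_mul, Matrix.mul_one, hUU, mul_smul_comm, smul_mul_assoc,
        ← hspec]
    rw [h1, det_mul, det_mul, mul_comm, ← mul_assoc, ← det_mul, ← det_mul,
      hUU', Matrix.one_mul]
    have h2 : (1 : Matrix n n ℂ) + (t : ℂ) • Matrix.diagonal (RCLike.ofReal ∘ β)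
        = Matrix.diagonal (fun i => ((1 + t * β i : ℝ) : ℂ)) := by
      rw [← Matrix.diagonal_one, ← Matrix.diagonal_smul, Matrix.diagonal_add]
      funext i
      simp
    rw [h2, det_diagonal]
  have hre : ∀ P : ℝ, (E + (P : ℂ) • K).det.re
      = N.det.re * ∏ i, (1 + (P - 1) * β i) := by
    intro P
    have h : ((P : ℂ) - 1) • B = (((P - 1 : ℝ) : ℂ)) • B := by push_cast; ring_nf
    rw [hdet, h, hdet2, det_eq_re hEK, ← Complex.ofReal_prod, ← Complex.ofReal_mul,
      Complex.ofReal_re]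
    simp
  have hdetQi : IsUnit (Q⁻¹).det := Q.isUnit_nonsing_inv_det hdetQ
  have hrankBK : B.rank = K.rank := by
    rw [hBdef]
    rw [Matrix.rank_mul_eq_left_of_isUnit_det Q⁻¹ (Q⁻¹ * K) hdetQi,
      Matrix.rank_mul_eq_right_of_isUnit_det Q⁻¹ K hdetQi]
  have hcard : (Fintype.card {i // β i ≠ 0} : ℝ) = (K.rank : ℝ) := by
    rw [← hrankBK, hBH.rank_eq_card_non_zero_eigs]
  have hval : (0:ℝ) + ∑ i, (if β i ≠ 0 then (1:ℝ) else 0) = (K.rank : ℝ) := by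
    rw [zero_add, ← hcard, Fintype.card_subtype, Finset.sum_boole]
  have hlim : Tendsto (fun P : ℝ => Real.log N.det.re / Real.log P
      + ∑ i, Real.log (1 + (P - 1) * β i) / Real.log P) atTop
      (nhds ((0:ℝ) + ∑ i, if β i ≠ 0 then (1:ℝ) else 0)) := by
    apply Tendsto.add
    · exact tendsto_const_nhds.div_atTop Real.tendsto_log_atTop
    · apply tendsto_finset_sum
      intro i _
      by_cases h : β i = 0
      · simp only [h, mul_zero, add_zero, Real.log_one, zero_div, ne_eq,
          not_true_eq_false, if_false]
        exact tendsto_const_nhds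
      · simpa [h] using tendsto_log_affine_div_log (lt_of_le_of_ne (hβ0 i) (Ne.symm h))
  rw [hval] at hlim
  refine hlim.congr' ?_
  filter_upwards [eventually_ge_atTop 2] with P hP
  have hfacts : ∀ i ∈ Finset.univ, 1 + (P - 1) * β i ≠ 0 := by
    intro i _
    have := hβ0 i
    nlinarith
  have hprod : (∏ i, (1 + (P - 1) * β i)) ≠ 0 := Finset.prod_ne_zero_iff.2 hfacts
  rw [hre P, Real.log_mul (det_re_pos hEK).ne' hprod,
    Real.log_prod hfacts, add_div, Finset.sum_div]

lemma finrank_prod_submodule {M N : Type*} [AddCommGroup M] [AddCommGroup N]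
    [Module ℂ M] [Module ℂ N] [FiniteDimensional ℂ M] [FiniteDimensional ℂ N]
    (p : Submodule ℂ M) (q : Submodule ℂ N) :
    finrank ℂ (p.prod q) = finrank ℂ p + finrank ℂ q := by
  have e : (p.prod q) ≃ₗ[ℂ] p × q :=
    { toFun := fun x => (⟨x.1.1, x.2.1⟩, ⟨x.1.2, x.2.2⟩)
      invFun := fun y => ⟨(y.1.1, y.2.1), ⟨y.1.2, y.2.2⟩⟩
      map_add' := fun a b => rfl
      map_smul' := fun c a => rfl
      left_inv := fun a => rfl
      right_inv := fun a => rfl }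
  rw [e.finrank_eq, Module.finrank_prod]

lemma rank_fromBlocks_diag {m m' n n' : Type*} [Fintype m] [Fintype m'] [Fintype n]
    [Fintype n'] [DecidableEq n] [DecidableEq n']
    (A : Matrix m n ℂ) (D : Matrix m' n' ℂ) :
    (fromBlocks A 0 0 D).rank = A.rank + D.rank := by
  classical
  set e2 := LinearEquiv.sumArrowLequivProdArrow m m' ℂ ℂ with he2
  have hmap : (LinearMap.range (fromBlocks A 0 0 D).mulVecLin).map
        (e2 : (m ⊕ m' → ℂ) →ₗ[ℂ] (m → ℂ) × (m' → ℂ))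
      = (LinearMap.range A.mulVecLin).prod (LinearMap.range D.mulVecLin) := by
    ext y
    constructor
    · rintro ⟨x, ⟨v, rfl⟩, rfl⟩
      refine ⟨⟨v ∘ Sum.inl, ?_⟩, ⟨v ∘ Sum.inr, ?_⟩⟩ <;>
        simp [mulVecLin_apply, he2, fromBlocks_mulVec,
          Equiv.sumArrowEquivProdArrow, LinearEquiv.sumArrowLequivProdArrow]
    · rintro ⟨⟨v1, h1⟩, ⟨v2, h2⟩⟩
      refine ⟨(fromBlocks A 0 0 D) *ᵥ (Sum.elim v1 v2), ⟨Sum.elim v1 v2, rfl⟩, ?_⟩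
      have h : (fromBlocks A (0 : Matrix m n' ℂ) (0 : Matrix m' n ℂ) D) *ᵥ (Sum.elim v1 v2)
          = Sum.elim (A *ᵥ v1) (D *ᵥ v2) := by
        rw [fromBlocks_mulVec]
        simp
      rw [h]
      ext <;> simp [he2, LinearEquiv.sumArrowLequivProdArrow,
        Equiv.sumArrowEquivProdArrow, ← h1, ← h2, mulVecLin_apply]
  rw [Matrix.rank, Matrix.rank, Matrix.rank, ← LinearEquiv.finrank_map_eq e2,
    hmap, finrank_prod_submodule]

lemma posSemidef_fromBlocks_diag {m m' : Type*} [Fintype m] [Fintype m']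
    [DecidableEq m] [DecidableEq m'] {A : Matrix m m ℂ} {D : Matrix m' m' ℂ}
    (hA : A.PosSemidef) (hD : D.PosSemidef) :
    (fromBlocks A 0 0 D).PosSemidef := by
  have h1 : fromRows (1 : Matrix m m ℂ) (0 : Matrix m' m ℂ) * A *
      (fromRows (1 : Matrix m m ℂ) (0 : Matrix m' m ℂ))ᴴ = fromBlocks A 0 0 0 := by
    rw [conjTranspose_fromRows_eq_fromCols_conjTranspose, fromRows_mul,
      fromRows_mul_fromCols]
    simp
  have h2 : fromRows (0 : Matrix m m' ℂ) (1 : Matrix m' m' ℂ) * D *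
      (fromRows (0 : Matrix m m' ℂ) (1 : Matrix m' m' ℂ))ᴴ = fromBlocks 0 0 0 D := by
    rw [conjTranspose_fromRows_eq_fromCols_conjTranspose, fromRows_mul,
      fromRows_mul_fromCols]
    simp
  have := (hA.mul_mul_conjTranspose_same (fromRows (1 : Matrix m m ℂ) (0 : Matrix m' m ℂ))).add
    (hD.mul_mul_conjTranspose_same (fromRows (0 : Matrix m m' ℂ) (1 : Matrix m' m' ℂ)))
  rw [h1, h2] at this
  simpa [fromBlocks_add] using this

lemma posDef_of_ker {n : Type*} [Fintype n] {M : Matrix n n ℂ} (hM : M.PosSemidef)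
    (h : ∀ x, M *ᵥ x = 0 → x = 0) : M.PosDef := by
  refine Matrix.PosDef.of_dotProduct_mulVec_pos hM.isHermitian fun x hx => ?_
  rcases (hM.dotProduct_mulVec_nonneg x).lt_or_eq with h' | h'
  · exact h'
  · exact absurd (h x ((hM.dotProduct_mulVec_zero_iff x).1 h'.symm)) hx

end DPCAux


namespace DPCAux

open Module

open scoped MatrixOrder in
theorem K_props {r tx ts : ℕ} (H1 : Matrix (Fin r) (Fin tx) ℂ)
    (H2 : Matrix (Fin r) (Fin ts) ℂ) (W : Matrix (Fin tx) (Fin ts) ℂ)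
    (SXb : Matrix (Fin tx) (Fin tx) ℂ) (SSb : Matrix (Fin ts) (Fin ts) ℂ)
    (SZ : Matrix (Fin r) (Fin r) ℂ) (c : ℝ)
    (hSXb : SXb.PosDef) (hSZ : SZ.PosDef) (hSSb : SSb.PosSemidef) (hc : 0 < c)
    (hgenH : ∀ A : Matrix (Fin tx ⊕ Fin ts) (Fin tx ⊕ Fin ts) ℂ, A.PosSemidef →
      (fromCols H1 H2 * A * (fromCols H1 H2)ᴴ).rank = min r A.rank) :
    (dpcM H1 H2 W SXb ((c : ℂ) • SSb) 0).PosSemidef ∧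
      (fromBlocks 0 0 0 SZ + dpcM H1 H2 W SXb ((c : ℂ) • SSb) 0).PosDef ∧
      (dpcM H1 H2 W SXb ((c : ℂ) • SSb) 0).rank = tx + min r SSb.rank := by
  classical
  set cS : Matrix (Fin ts) (Fin ts) ℂ := (c : ℂ) • SSb with hcSdef
  have hcS : cS.PosSemidef := posSemidef_real_smul hSSb hc.le
  set K := dpcM H1 H2 W SXb cS 0 with hKdef
  set Sb : Matrix (Fin tx ⊕ Fin ts) (Fin tx ⊕ Fin ts) ℂ := fromBlocks SXb 0 0 cS with hSbdef
  set T : Matrix (Fin tx ⊕ Fin r) (Fin tx ⊕ Fin ts) ℂ := fromBlocks 1 W H1 H2 with hTdef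
  have hKTS : K = T * Sb * Tᴴ := by
    rw [hKdef, hTdef, hSbdef, dpcM, fromBlocks_conjTranspose, fromBlocks_multiply,
      fromBlocks_multiply]
    simp [Matrix.mul_assoc]
  set l1 := CFC.sqrt SXb with hl1def
  have hl1 : l1 * l1 = SXb := CFC.sqrt_mul_sqrt_self SXb hSXb.posSemidef.nonneg
  have hl1H : l1ᴴ = l1 := (CFC.sqrt_nonneg SXb).posSemidef.isHermitian
  have hl1det : IsUnit l1.det := by
    have hm : l1.det * l1.det = SXb.det := by rw [← det_mul, hl1]
    exact isUnit_iff_ne_zero.2 fun h => hSXb.det_pos.ne' (by rw [← hm, h, mul_zero])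
  set l2 := CFC.sqrt cS with hl2def
  have hl2 : l2 * l2 = cS := CFC.sqrt_mul_sqrt_self cS hcS.nonneg
  have hl2H : l2ᴴ = l2 := (CFC.sqrt_nonneg cS).posSemidef.isHermitian
  set L : Matrix (Fin tx ⊕ Fin ts) (Fin tx ⊕ Fin ts) ℂ := fromBlocks l1 0 0 l2 with hLdef
  have hLH : Lᴴ = L := by
    rw [hLdef, fromBlocks_conjTranspose, hl1H, hl2H]
    simp
  have hLL : L * Lᴴ = Sb := by
    rw [hLH, hLdef, hSbdef, fromBlocks_multiply]
    simp [hl1, hl2]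
  have hKfact : K = (T * L) * (T * L)ᴴ := by
    rw [conjTranspose_mul, hKTS, ← hLL, ← Matrix.mul_assoc T L Lᴴ,
      Matrix.mul_assoc (T * L) Lᴴ Tᴴ]
  have hKpsd : K.PosSemidef := hKfact ▸ posSemidef_self_mul_conjTranspose (T * L)
  set H' : Matrix (Fin r) (Fin ts) ℂ := H2 - H1 * W with hH'def
  have hTL : T * L = fromBlocks l1 (W * l2) (H1 * l1) (H2 * l2) := by
    rw [hTdef, hLdef, fromBlocks_multiply]
    simp
  set E0 : Matrix (Fin tx ⊕ Fin r) (Fin tx ⊕ Fin r) ℂ := fromBlocks 1 0 (-H1) 1 with hE0def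
  have hE0det : IsUnit E0.det := by
    rw [hE0def, det_fromBlocks_zero₁₂]
    simp
  have hE0TL : E0 * (T * L) = fromBlocks l1 (W * l2) 0 (H' * l2) := by
    rw [hE0def, hTL, fromBlocks_multiply, hH'def]
    simp [Matrix.sub_mul, Matrix.mul_assoc, neg_add_eq_sub]
  set F : Matrix (Fin tx ⊕ Fin ts) (Fin tx ⊕ Fin ts) ℂ :=
    fromBlocks 1 (-(l1⁻¹ * (W * l2))) 0 1 with hFdef
  have hFdet : IsUnit F.det := by
    rw [hFdef, det_fromBlocks_zero₂₁]
    simp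
  have hEF : E0 * (T * L) * F = fromBlocks l1 0 0 (H' * l2) := by
    rw [hE0TL, hFdef, fromBlocks_multiply]
    simp [Matrix.mul_neg, ← Matrix.mul_assoc, Matrix.mul_nonsing_inv _ hl1det]
  have hr1 : K.rank = (T * L).rank := by rw [hKfact, rank_self_mul_conjTranspose]
  have hr2 : (T * L).rank = (E0 * (T * L)).rank :=
    (rank_mul_eq_right_of_isUnit_det E0 (T * L) hE0det).symm
  have hr3 : (E0 * (T * L)).rank = (E0 * (T * L) * F).rank :=
    (rank_mul_eq_left_of_isUnit_det F (E0 * (T * L)) hFdet).symm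
  have hl1rank : l1.rank = tx := by
    rw [Matrix.rank_of_isUnit l1 ((isUnit_iff_isUnit_det _).2 hl1det)]
    simp
  have hH'l2 : (H' * l2) * (H' * l2)ᴴ = H' * cS * H'ᴴ := by
    rw [conjTranspose_mul, hl2H, ← hl2]
    rw [← Matrix.mul_assoc, Matrix.mul_assoc H' l2 l2, Matrix.mul_assoc]
  have hrH'l2 : (H' * l2).rank = (H' * cS * H'ᴴ).rank := by
    rw [← hH'l2, rank_self_mul_conjTranspose]
  set M' : Matrix (Fin tx ⊕ Fin ts) (Fin ts) ℂ := fromRows (-W) 1 with hM'def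
  have hH'FC : H' = fromCols H1 H2 * M' := by
    rw [hM'def, fromCols_mul_fromRows, hH'def]
    simp [Matrix.mul_neg, neg_add_eq_sub]
  set A' := M' * cS * M'ᴴ with hA'def
  have hA'psd : A'.PosSemidef := hcS.mul_mul_conjTranspose_same M'
  have hsand : H' * cS * H'ᴴ = fromCols H1 H2 * A' * (fromCols H1 H2)ᴴ := by
    rw [hH'FC, conjTranspose_mul, hA'def]
    simp [Matrix.mul_assoc]
  have hgen' := hgenH A' hA'psd
  have hle1 : A'.rank ≤ cS.rank :=
    le_trans (rank_mul_le_left _ _) (rank_mul_le_right _ _)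
  set fc : Matrix (Fin ts) (Fin tx ⊕ Fin ts) ℂ := fromCols 0 1 with hfcdef
  have hrec : fc * M' = 1 := by
    rw [hfcdef, hM'def, fromCols_mul_fromRows]
    simp
  have hle2 : cS.rank ≤ A'.rank := by
    have hcs2 : fc * A' * fcᴴ = cS := by
      rw [hA'def, ← Matrix.mul_assoc, ← Matrix.mul_assoc, hrec, Matrix.one_mul,
        Matrix.mul_assoc, ← conjTranspose_mul, hrec, conjTranspose_one, Matrix.mul_one]
    calc cS.rank = (fc * A' * fcᴴ).rank := by rw [hcs2]
      _ ≤ (fc * A').rank := rank_mul_le_left _ _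
      _ ≤ A'.rank := rank_mul_le_right _ _
  have hA'cS : A'.rank = cS.rank := le_antisymm hle1 hle2
  have hcSrank : cS.rank = SSb.rank := by
    have h1 : cS = ((c : ℂ) • (1 : Matrix (Fin ts) (Fin ts) ℂ)) * SSb := by
      rw [Matrix.smul_mul, Matrix.one_mul, hcSdef]
    have hdetc : IsUnit ((c : ℂ) • (1 : Matrix (Fin ts) (Fin ts) ℂ)).det := by
      rw [det_smul, det_one, mul_one]
      exact isUnit_iff_ne_zero.2 (pow_ne_zero _ (by exact_mod_cast hc.ne'))
    rw [h1, rank_mul_eq_right_of_isUnit_det _ _ hdetc]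
  have hKrank : K.rank = tx + min r SSb.rank := by
    rw [hr1, hr2, hr3, hEF, rank_fromBlocks_diag, hl1rank, hrH'l2, hsand, hgen',
      hA'cS, hcSrank]
  have hE1psd : (fromBlocks 0 0 0 SZ :
      Matrix (Fin tx ⊕ Fin r) (Fin tx ⊕ Fin r) ℂ).PosSemidef :=
    posSemidef_fromBlocks_diag Matrix.PosSemidef.zero hSZ.posSemidef
  have hsum_psd := hE1psd.add hKpsd
  refine ⟨hKpsd, posDef_of_ker hsum_psd ?_, hKrank⟩
  intro x hx
  have hq : star x ⬝ᵥ ((fromBlocks 0 0 0 SZ + K) *ᵥ x) = 0 := by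
    rw [hx, dotProduct_zero]
  rw [add_mulVec, dotProduct_add] at hq
  have h0 := (add_eq_zero_iff_of_nonneg (hE1psd.dotProduct_mulVec_nonneg x) (hKpsd.dotProduct_mulVec_nonneg x)).1 hq
  have hE1x : (fromBlocks 0 0 0 SZ : Matrix (Fin tx ⊕ Fin r) (Fin tx ⊕ Fin r) ℂ) *ᵥ x = 0 :=
    (hE1psd.dotProduct_mulVec_zero_iff x).1 h0.1
  have hKx0 : star x ⬝ᵥ (K *ᵥ x) = 0 := h0.2
  have hx2 : x ∘ Sum.inr = 0 := by
    have hSZx : SZ *ᵥ (x ∘ Sum.inr) = 0 := by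
      funext i
      have h := congrFun hE1x (Sum.inr i)
      rw [fromBlocks_mulVec] at h
      simpa using h
    exact (Matrix.mulVec_injective_iff_isUnit.2 hSZ.isUnit)
      (by rw [hSZx, Matrix.mulVec_zero])
  have hu : (T * L)ᴴ *ᵥ x = 0 := by
    have h1 : star x ⬝ᵥ (K *ᵥ x) = star ((T * L)ᴴ *ᵥ x) ⬝ᵥ ((T * L)ᴴ *ᵥ x) := by
      rw [hKfact, ← Matrix.mulVec_mulVec, dotProduct_mulVec, star_mulVec,
        conjTranspose_conjTranspose]
    exact dotProduct_star_self_eq_zero.1 (by rw [← h1]; exact hKx0)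
  have hTx : Tᴴ *ᵥ x = Sum.elim (x ∘ Sum.inl + H1ᴴ *ᵥ (x ∘ Sum.inr))
      (Wᴴ *ᵥ (x ∘ Sum.inl) + H2ᴴ *ᵥ (x ∘ Sum.inr)) := by
    rw [hTdef, fromBlocks_conjTranspose, fromBlocks_mulVec]
    simp
  have hul : l1 *ᵥ (x ∘ Sum.inl) = 0 := by
    have h2 : (T * L)ᴴ *ᵥ x = Lᴴ *ᵥ (Tᴴ *ᵥ x) := by
      rw [conjTranspose_mul, ← Matrix.mulVec_mulVec]
    rw [h2, hTx, hx2, hLH, hLdef, fromBlocks_mulVec] at hu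
    funext i
    have h3 := congrFun hu (Sum.inl i)
    simpa using h3
  have hx1 : x ∘ Sum.inl = 0 :=
    (Matrix.mulVec_injective_iff_isUnit.2 ((isUnit_iff_isUnit_det _).2 hl1det))
      (by rw [hul, Matrix.mulVec_zero])
  funext i
  cases i with
  | inl i => exact congrFun hx1 i
  | inr i => exact congrFun hx2 i

theorem dpc_pointwise {r tx ts : ℕ}
    (H : Matrix (Fin r) (Fin tx) ℂ × Matrix (Fin r) (Fin ts) ℂ)
    (W : Matrix (Fin tx) (Fin ts) ℂ)
    (SXb : Matrix (Fin tx) (Fin tx) ℂ) (SSb : Matrix (Fin ts) (Fin ts) ℂ)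
    (SZ : Matrix (Fin r) (Fin r) ℂ) (c : ℝ)
    (hSXb : SXb.PosDef) (hSZ : SZ.PosDef) (hSSb : SSb.PosSemidef) (hc : 0 < c)
    (hgenH : ∀ A : Matrix (Fin tx ⊕ Fin ts) (Fin tx ⊕ Fin ts) ℂ, A.PosSemidef →
      (fromCols H.1 H.2 * A * (fromCols H.1 H.2)ᴴ).rank = min r A.rank) :
    Tendsto (fun P : ℝ => dpcRate W SXb SSb SZ c P H / Real.log P) atTop
      (nhds ((min r (tx + SSb.rank) : ℝ) - (min r SSb.rank : ℝ))) := by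
  classical
  obtain ⟨hKpsd, hEKpd, hKrank⟩ :=
    K_props H.1 H.2 W SXb SSb SZ c hSXb hSZ hSSb hc hgenH
  set cS : Matrix (Fin ts) (Fin ts) ℂ := (c : ℂ) • SSb with hcSdef
  have hcS : cS.PosSemidef := posSemidef_real_smul hSSb hc.le
  set K := dpcM H.1 H.2 W SXb cS 0 with hKdef
  set G : Matrix (Fin r) (Fin r) ℂ := H.1 * SXb * H.1ᴴ + H.2 * cS * H.2ᴴ with hGdef
  set Sb : Matrix (Fin tx ⊕ Fin ts) (Fin tx ⊕ Fin ts) ℂ := fromBlocks SXb 0 0 cS with hSbdef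
  have hSbpsd : Sb.PosSemidef := posSemidef_fromBlocks_diag hSXb.posSemidef hcS
  have hGfact : G = fromCols H.1 H.2 * Sb * (fromCols H.1 H.2)ᴴ := by
    rw [hGdef, hSbdef, conjTranspose_fromCols_eq_fromRows_conjTranspose,
      fromCols_mul_fromBlocks, fromCols_mul_fromRows]
    simp [Matrix.mul_assoc]
  have hGpsd : G.PosSemidef := hGfact ▸ hSbpsd.mul_mul_conjTranspose_same _
  have hSZG : (SZ + G).PosDef := hSZ.add_posSemidef hGpsd
  have hcSrank : cS.rank = SSb.rank := by
    have h1 : cS = ((c : ℂ) • (1 : Matrix (Fin ts) (Fin ts) ℂ)) * SSb := by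
      rw [Matrix.smul_mul, Matrix.one_mul, hcSdef]
    have hdetc : IsUnit ((c : ℂ) • (1 : Matrix (Fin ts) (Fin ts) ℂ)).det := by
      rw [det_smul, det_one, mul_one]
      exact isUnit_iff_ne_zero.2 (pow_ne_zero _ (by exact_mod_cast hc.ne'))
    rw [h1, rank_mul_eq_right_of_isUnit_det _ _ hdetc]
  have hGrank : G.rank = min r (tx + SSb.rank) := by
    rw [hGfact, hgenH Sb hSbpsd, hSbdef, rank_fromBlocks_diag,
      Matrix.rank_of_isUnit SXb hSXb.isUnit, hcSrank]
    simp
  -- rewrite dpcRate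
  have hcP : ∀ P : ℝ, (((c * P : ℝ)) : ℂ) • SSb = (P : ℂ) • cS := by
    intro P
    rw [hcSdef, smul_smul]
    push_cast
    ring_nf
  have hbig : ∀ P : ℝ, SZ + H.1 * ((P : ℂ) • SXb) * H.1ᴴ
      + H.2 * ((((c * P : ℝ)) : ℂ) • SSb) * H.2ᴴ = SZ + (P : ℂ) • G := by
    intro P
    rw [hcP P, Matrix.mul_smul, Matrix.smul_mul, Matrix.mul_smul, Matrix.smul_mul,
      add_assoc, ← smul_add, hGdef]
  have hdpcM : ∀ P : ℝ, dpcM H.1 H.2 W ((P : ℂ) • SXb) ((((c * P : ℝ)) : ℂ) • SSb) SZ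
      = fromBlocks 0 0 0 SZ + (P : ℂ) • K := by
    intro P
    rw [hcP P, hKdef, dpcM, dpcM, Matrix.fromBlocks_smul, fromBlocks_add]
    simp [Matrix.mul_smul, Matrix.smul_mul, smul_add, add_assoc]
  have ha : ∀ P : ℝ, ((P : ℂ) • SXb).det.re = P ^ tx * SXb.det.re := by
    intro P
    rw [det_smul, det_eq_re hSXb]
    rw [show ((P:ℂ)) ^ Fintype.card (Fin tx) * ((SXb.det.re : ℝ) : ℂ)
      = (((P ^ tx * SXb.det.re : ℝ)) : ℂ) by push_cast; simp]
    exact Complex.ofReal_re _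
  -- limits
  have hA : Tendsto (fun P : ℝ => Real.log (((P : ℂ) • SXb).det.re) / Real.log P)
      atTop (nhds (tx : ℝ)) := by
    have h0 : Tendsto (fun P : ℝ => (tx : ℝ) + Real.log SXb.det.re / Real.log P)
        atTop (nhds ((tx : ℝ) + 0)) :=
      tendsto_const_nhds.add (tendsto_const_nhds.div_atTop Real.tendsto_log_atTop)
    rw [add_zero] at h0
    refine h0.congr' ?_
    filter_upwards [eventually_ge_atTop 2] with P hP
    have hP0 : (0 : ℝ) < P := by linarith
    have hlogP : Real.log P ≠ 0 := (Real.log_pos (by linarith)).ne'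
    rw [ha P, Real.log_mul (pow_pos hP0 tx).ne' (det_re_pos hSXb).ne', Real.log_pow,
      add_div, mul_div_assoc, div_self hlogP, mul_one]
  have hB := tendsto_logdet_rank SZ G hGpsd hSZG
  have hC := tendsto_logdet_rank (fromBlocks 0 0 0 SZ) K hKpsd hEKpd
  have hsum := (hA.add hB).sub hC
  have hvaleq : (tx : ℝ) + (G.rank : ℝ) - (K.rank : ℝ)
      = ((min r (tx + SSb.rank) : ℝ) - (min r SSb.rank : ℝ)) := by
    rw [hGrank, hKrank]
    push_cast
    ring
  rw [hvaleq] at hsum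
  refine hsum.congr' ?_
  filter_upwards [eventually_ge_atTop 2] with P hP
  have hP0 : (0 : ℝ) < P := by linarith
  have haP : 0 < ((P : ℂ) • SXb).det.re := by
    rw [ha P]
    exact mul_pos (pow_pos hP0 tx) (det_re_pos hSXb)
  have hbP : 0 < (SZ + (P : ℂ) • G).det.re :=
    det_re_pos (hSZ.add_posSemidef (posSemidef_real_smul hGpsd hP0.le))
  have hcPpos : 0 < ((fromBlocks 0 0 0 SZ : Matrix (Fin tx ⊕ Fin r) (Fin tx ⊕ Fin r) ℂ)
      + (P : ℂ) • K).det.re := by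
    have hdec : (fromBlocks 0 0 0 SZ : Matrix (Fin tx ⊕ Fin r) (Fin tx ⊕ Fin r) ℂ)
        + (P : ℂ) • K = (fromBlocks 0 0 0 SZ + K) + ((P - 1 : ℝ) : ℂ) • K := by
      push_cast
      rw [sub_smul, one_smul]
      abel
    rw [hdec]
    exact det_re_pos (hEKpd.add_posSemidef (posSemidef_real_smul hKpsd (by linarith)))
  rw [dpcRate, hbig P, hdpcM P]
  rw [Real.log_div (mul_pos haP hbP).ne' hcPpos.ne', Real.log_mul haP.ne' hbP.ne',
    sub_div, add_div]

end DPCAux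

/-- Theorem 1, expectation form: if `μ`-almost every channel pair
`(H1, H2)` is generic, then for every fixed inflation factor `W`, under the stated
integrability and domination hypotheses, the ergodic DPC rate satisfies
`(∫ f_P dμ) / log P → min(r, t_x + rank Σ̄S) − min(r, rank Σ̄S)` as `P → ∞`;
in particular the limit is the same for every such `W` and equals the value at `W = 0`. -/
theorem ergodic_dpc_scaling_factor {r tx ts : ℕ}
    (μ : Measure (Matrix (Fin r) (Fin tx) ℂ × Matrix (Fin r) (Fin ts) ℂ))
    [IsProbabilityMeasure μ]
    (hgen : ∀ᵐ H ∂μ, ∀ A : Matrix (Fin tx ⊕ Fin ts) (Fin tx ⊕ Fin ts) ℂ,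
      A.PosSemidef →
      (fromCols H.1 H.2 * A * (fromCols H.1 H.2)ᴴ).rank = min r A.rank)
    (SXb : Matrix (Fin tx) (Fin tx) ℂ) (SZ : Matrix (Fin r) (Fin r) ℂ)
    (SSb : Matrix (Fin ts) (Fin ts) ℂ)
    (hSXb : SXb.PosDef) (hSZ : SZ.PosDef) (hSSb : SSb.PosSemidef)
    (c : ℝ) (hc : 0 < c)
    (W : Matrix (Fin tx) (Fin ts) ℂ)
    (hint : ∀ P : ℝ, 2 ≤ P → Integrable (dpcRate W SXb SSb SZ c P) μ)
    (g : Matrix (Fin r) (Fin tx) ℂ × Matrix (Fin r) (Fin ts) ℂ → ℝ)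
    (hg : Integrable g μ)
    (hdom : ∀ P : ℝ, 2 ≤ P →
      ∀ᵐ H ∂μ, |dpcRate W SXb SSb SZ c P H| / Real.log P ≤ g H) :
    Tendsto (fun P : ℝ => (∫ H, dpcRate W SXb SSb SZ c P H ∂μ) / Real.log P)
      atTop
      (nhds ((min r (tx + SSb.rank) : ℝ) - (min r SSb.rank : ℝ))) := by
  classical
  set L : ℝ := ((min r (tx + SSb.rank) : ℝ) - (min r SSb.rank : ℝ)) with hLdef
  have hμlim : ∀ᵐ H ∂μ, Tendsto (fun P : ℝ => dpcRate W SXb SSb SZ c P H / Real.log P)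
      atTop (nhds L) := by
    filter_upwards [hgen] with H hH
    exact DPCAux.dpc_pointwise H W SXb SSb SZ c hSXb hSZ hSSb hc hH
  have hmeas : ∀ᶠ P : ℝ in atTop, AEStronglyMeasurable
      (fun H => dpcRate W SXb SSb SZ c P H / Real.log P) μ := by
    filter_upwards [eventually_ge_atTop 2] with P hP
    exact ((hint P hP).div_const _).aestronglyMeasurable
  have hbound : ∀ᶠ P : ℝ in atTop, ∀ᵐ H ∂μ,
      ‖dpcRate W SXb SSb SZ c P H / Real.log P‖ ≤ g H := by
    filter_upwards [eventually_ge_atTop 2] with P hP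
    filter_upwards [hdom P hP] with H hH
    have hlogP : 0 < Real.log P := Real.log_pos (by linarith)
    rw [norm_div, Real.norm_eq_abs, Real.norm_eq_abs, abs_of_pos hlogP]
    exact hH
  have hDCT := MeasureTheory.tendsto_integral_filter_of_dominated_convergence
    (μ := μ) (F := fun P : ℝ => fun H => dpcRate W SXb SSb SZ c P H / Real.log P)
    (f := fun _ => L) g hmeas hbound hg hμlim
  have hconst : (∫ _ , L ∂μ) = L := by
    rw [integral_const]
    simp
  rw [hconst] at hDCT
  rw [hLdef] at hDCT
  refine Tendsto.congr (fun P => ?_) hDCT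
  rw [integral_div]
end

section
/- (Scaling of the primary user's rate in the cognitive radio channel.) Let H̄1 = [H11 H21] ∈ ℂ^{r1×(t1+t2)} with H11 ∈ ℂ^{r1×t1} and H21 ∈ ℂ^{r1×t2}. Let Σ ∈ ℂ^{(t1+t2)×(t1+t2)} and Σ22 ∈ ℂ^{t2×t2} be Hermitian positive semidefinite, and set Σ' = Σ + diag(0_{t1}, Σ22) (the block-diagonal embedding of Σ22 into the last t2 coordinates). Assume rank(H̄1 Σ' H̄1*) = min(r1, rank Σ') and rank(H21 Σ22 H21*) = min(r1, rank Σ22). Then, as the real power level P tends to infinity, [ log det(I_{r1} + P·H̄1 Σ H̄1* + P·H21 Σ22 H21*) − log det(I_{r1} + P·H21 Σ22 H21*) ] / log P tends to min(r1, rank Σ') − min(r1, rank Σ22). -/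
open Matrix Filter
open scoped ComplexOrder

private lemma term_tendsto {μ : ℝ} (hμ : 0 ≤ μ) :
    Tendsto (fun P : ℝ => Real.log (1 + P * μ) / Real.log P) atTop
      (nhds (if μ ≠ 0 then (1 : ℝ) else 0)) := by
  rcases eq_or_lt_of_le hμ with h0 | hpos
  · simp [← h0]
  · rw [if_pos hpos.ne']
    have hnum : Tendsto (fun P : ℝ => Real.log (P⁻¹ + μ)) atTop (nhds (Real.log μ)) := by
      have h1 : Tendsto (fun P : ℝ => P⁻¹ + μ) atTop (nhds μ) := by
        simpa using tendsto_inv_atTop_zero.add (tendsto_const_nhds (x := μ))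
      exact ((Real.continuousAt_log hpos.ne').tendsto).comp h1
    have h2 : Tendsto (fun P : ℝ => 1 + Real.log (P⁻¹ + μ) / Real.log P) atTop (nhds 1) := by
      have := hnum.div_atTop Real.tendsto_log_atTop
      simpa using (tendsto_const_nhds (x := (1:ℝ))).add this
    refine Tendsto.congr' ?_ h2
    filter_upwards [eventually_gt_atTop (1 : ℝ)] with P hP
    have hP0 : (0 : ℝ) < P := lt_trans one_pos hP
    have hlogP : Real.log P ≠ 0 := (Real.log_pos hP).ne'
    have harg : (0 : ℝ) < P⁻¹ + μ := add_pos (inv_pos.mpr hP0) hpos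
    have hmul : 1 + P * μ = P * (P⁻¹ + μ) := by
      rw [mul_add, mul_inv_cancel₀ hP0.ne']
    rw [hmul, Real.log_mul hP0.ne' harg.ne', add_div, div_self hlogP]

private lemma det_one_add_smul {n : ℕ} {A : Matrix (Fin n) (Fin n) ℂ} (hA : A.IsHermitian)
    (P : ℝ) :
    (1 + (P : ℂ) • A).det = ((∏ i, (1 + P * hA.eigenvalues i) : ℝ) : ℂ) := by
  set U : Matrix (Fin n) (Fin n) ℂ := (hA.eigenvectorUnitary : Matrix (Fin n) (Fin n) ℂ)
  have hU : U * star U = 1 := (Matrix.mem_unitaryGroup_iff).mp hA.eigenvectorUnitary.2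
  set D : Matrix (Fin n) (Fin n) ℂ := diagonal (RCLike.ofReal ∘ hA.eigenvalues)
  have hspec : A = U * D * star U := hA.spectral_theorem
  have key : (1 : Matrix (Fin n) (Fin n) ℂ) + (P : ℂ) • A = U * (1 + (P : ℂ) • D) * star U := by
    rw [mul_add, add_mul, mul_one, hU, hspec]
    rw [Matrix.mul_smul, Matrix.smul_mul]
  rw [key, det_mul_right_comm, hU, one_mul]
  have hdiag : (1 : Matrix (Fin n) (Fin n) ℂ) + (P : ℂ) • D =
      diagonal (fun i => ((1 + P * hA.eigenvalues i : ℝ) : ℂ)) := by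
    ext i j
    by_cases h : i = j
    · subst h; simp [D, diagonal_apply_eq, Matrix.one_apply_eq]
    · simp [D, diagonal_apply_ne _ h, Matrix.one_apply_ne h]
  rw [hdiag, det_diagonal]
  push_cast
  rfl

private lemma tendsto_logdet {n : ℕ} {A : Matrix (Fin n) (Fin n) ℂ} (hA : A.PosSemidef) :
    Tendsto (fun P : ℝ => Real.log ((1 + (P : ℂ) • A).det.re) / Real.log P) atTop
      (nhds (A.rank : ℝ)) := by
  classical
  set μ : Fin n → ℝ := hA.1.eigenvalues
  have hμ : ∀ i, 0 ≤ μ i := fun i => hA.eigenvalues_nonneg i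
  have hre : ∀ P : ℝ, (1 + (P : ℂ) • A).det.re = ∏ i, (1 + P * μ i) := by
    intro P
    rw [det_one_add_smul hA.1 P, Complex.ofReal_re]
  -- limit value computation
  have hrank : (A.rank : ℝ) = ∑ i, (if μ i ≠ 0 then (1 : ℝ) else 0) := by
    rw [hA.1.rank_eq_card_non_zero_eigs, Fintype.card_subtype]
    rw [Finset.sum_boole]
  rw [hrank]
  have hsum : Tendsto (fun P : ℝ => ∑ i, Real.log (1 + P * μ i) / Real.log P) atTop
      (nhds (∑ i, (if μ i ≠ 0 then (1 : ℝ) else 0))) :=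
    tendsto_finset_sum _ (fun i _ => term_tendsto (hμ i))
  refine Tendsto.congr' ?_ hsum
  filter_upwards [eventually_gt_atTop (0 : ℝ)] with P hP
  have hpos : ∀ i ∈ Finset.univ, (1 + P * μ i) ≠ 0 := by
    intro i _
    have : (0 : ℝ) < 1 + P * μ i :=
      lt_add_of_lt_of_nonneg one_pos (mul_nonneg hP.le (hμ i))
    exact this.ne'
  rw [← Finset.sum_div, hre P, Real.log_prod hpos]

/-- scaling of the primary user's rate in the cognitive radio channel:
with `H̄1 = [H11 H21]`, `Σ' = Σ + diag(0, Σ22)`, and the stated rank conditions,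
`[ log det(I + P·H̄1 Σ H̄1* + P·H21 Σ22 H21*) − log det(I + P·H21 Σ22 H21*) ] / log P`
tends to `min(r1, rank Σ') − min(r1, rank Σ22)` as `P → ∞`. -/
theorem primary_rate_scaling {r1 t1 t2 : ℕ}
    (H11 : Matrix (Fin r1) (Fin t1) ℂ) (H21 : Matrix (Fin r1) (Fin t2) ℂ)
    (S : Matrix (Fin t1 ⊕ Fin t2) (Fin t1 ⊕ Fin t2) ℂ)
    (S22 : Matrix (Fin t2) (Fin t2) ℂ)
    (hS : S.PosSemidef) (hS22 : S22.PosSemidef)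
    (hrank1 : (fromCols H11 H21 * (S + fromBlocks 0 0 0 S22) *
        (fromCols H11 H21)ᴴ).rank = min r1 (S + fromBlocks 0 0 0 S22).rank)
    (hrank2 : (H21 * S22 * H21ᴴ).rank = min r1 S22.rank) :
    Tendsto (fun P : ℝ =>
        (Real.log ((1 + (P : ℂ) • (fromCols H11 H21 * S * (fromCols H11 H21)ᴴ)
              + (P : ℂ) • (H21 * S22 * H21ᴴ)).det.re)
          - Real.log ((1 + (P : ℂ) • (H21 * S22 * H21ᴴ)).det.re)) / Real.log P)
      atTop
      (nhds ((min r1 (S + fromBlocks 0 0 0 S22).rank : ℝ) - (min r1 S22.rank : ℝ))) := by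
  set Hb : Matrix (Fin r1) (Fin t1 ⊕ Fin t2) ℂ := fromCols H11 H21
  -- the block embedding of S22
  have hblock : fromBlocks (0 : Matrix (Fin t1) (Fin t1) ℂ) 0 0 S22 =
      fromRows (0 : Matrix (Fin t1) (Fin t2) ℂ) 1 * S22 *
        (fromRows (0 : Matrix (Fin t1) (Fin t2) ℂ) 1)ᴴ := by
    rw [conjTranspose_fromRows_eq_fromCols_conjTranspose, fromRows_mul,
      fromRows_mul_fromCols]
    simp
  have hblockPSD : (fromBlocks (0 : Matrix (Fin t1) (Fin t1) ℂ) 0 0 S22).PosSemidef := by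
    rw [hblock]
    exact hS22.mul_mul_conjTranspose_same _
  have hS' : (S + fromBlocks 0 0 0 S22).PosSemidef := hS.add hblockPSD
  have hPSD1 : (Hb * (S + fromBlocks 0 0 0 S22) * Hbᴴ).PosSemidef :=
    hS'.mul_mul_conjTranspose_same Hb
  have hPSD2 : (H21 * S22 * H21ᴴ).PosSemidef := hS22.mul_mul_conjTranspose_same H21
  have hkey : Hb * fromBlocks (0 : Matrix (Fin t1) (Fin t1) ℂ) 0 0 S22 * Hbᴴ = H21 * S22 * H21ᴴ := by
    rw [show Hbᴴ = fromRows H11ᴴ H21ᴴ from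
      conjTranspose_fromCols_eq_fromRows_conjTranspose H11 H21]
    rw [show Hb = fromCols H11 H21 from rfl, fromCols_mul_fromBlocks,
      fromCols_mul_fromRows]
    simp [Matrix.mul_assoc]
  have hmat : ∀ P : ℝ,
      1 + (P : ℂ) • (Hb * S * Hbᴴ) + (P : ℂ) • (H21 * S22 * H21ᴴ) =
        1 + (P : ℂ) • (Hb * (S + fromBlocks 0 0 0 S22) * Hbᴴ) := by
    intro P
    rw [Matrix.mul_add, Matrix.add_mul, smul_add, hkey, add_assoc]
  have h1 := tendsto_logdet hPSD1
  have h2 := tendsto_logdet hPSD2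
  rw [hrank1] at h1
  rw [hrank2] at h2
  have := h1.sub h2
  refine Tendsto.congr' ?_ (by convert this using 2 <;> norm_cast)
  filter_upwards with P
  rw [hmat P, sub_div]
end
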